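/- arXiv:2108.12316 — 5 statements merged into one kernel-verified Lean document; each statement's English description precedes it below -/
import Mathlib

section
/- Let f, g : ℝ^n → ℝ be measurable functions such that ρ = e^{−f}·β and ν = e^{−g}·β are probability measures. Let φ : ℝ^n → ℝ be a C² function such that x ↦ |x|²/2 + φ(x) is convex, the matrix I + Hess φ(x) is invertible for every x, and the map T = id + ∇φ pushes ρ forward to ν. Then φ solves the Gaussian Monge–Ampère equation: for ρ-a.e. x, e^{−f(x)} = e^{−g(T(x))}·det(I + Hess φ(x))·exp(−⟨x, ∇φ(x)⟩ − |∇φ(x)|²/2). Equivalently, with det₂(I + A) := det(I + A)·e^{−trace(A)} and (Lφ)(x) = ⟨x, ∇φ(x)⟩ − Δφ(x), one has e^{−f} = e^{−g∘T}·det₂(I + Hess φ)·exp(−Lφ − |∇φ|²/2) ρ-a.e. -/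
open MeasureTheory Real Filter Topology

/-- The standard Gaussian measure on `ℝ^n`, i.e. the measure with density
`(2π)^(-n/2) exp(-|x|²/2)` with respect to Lebesgue measure. -/
noncomputable def stdGaussian (n : ℕ) : Measure (Fin n → ℝ) :=
  volume.withDensity fun x =>
    ENNReal.ofReal ((2 * π) ^ (-(n : ℝ) / 2) * Real.exp (-(∑ i, x i ^ 2) / 2))

/-- The gradient of `f : ℝ^n → ℝ`, given coordinatewise by `(∇f)(x)ᵢ = ∂ᵢf(x)`. -/
noncomputable def grad {n : ℕ} (f : (Fin n → ℝ) → ℝ) (x : Fin n → ℝ) : Fin n → ℝ :=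
  fun i => fderiv ℝ f x (Pi.single i 1)

/-- The Hessian matrix of `f : ℝ^n → ℝ`. -/
noncomputable def hess {n : ℕ} (f : (Fin n → ℝ) → ℝ) (x : Fin n → ℝ) :
    Matrix (Fin n) (Fin n) ℝ :=
  Matrix.of fun i j => fderiv ℝ (fun y => grad f y j) x (Pi.single i 1)

/-- The Jacobian matrix of a vector field `ξ : ℝ^n → ℝ^n`:
`(Dξ)(x)ᵢⱼ = ∂ⱼξᵢ(x)`. -/
noncomputable def jac {n : ℕ} (ξ : (Fin n → ℝ) → Fin n → ℝ) (x : Fin n → ℝ) :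
    Matrix (Fin n) (Fin n) ℝ :=
  Matrix.of fun i j => fderiv ℝ (fun y => ξ y i) x (Pi.single j 1)

open Matrix
open scoped ENNReal

section Aux
variable {n : ℕ} {φ : (Fin n → ℝ) → ℝ}

local notation "E" => Fin n → ℝ

/-- second derivative -/
noncomputable def f2 (φ : (Fin n → ℝ) → ℝ) (x : E) : E →L[ℝ] E →L[ℝ] ℝ :=
  fderiv ℝ (fderiv ℝ φ) x

lemma clm_expand (L : E →L[ℝ] ℝ) (v : E) : L v = ∑ i, v i * L (Pi.single i 1) := by
  conv_lhs => rw [← Finset.univ_sum_single v]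
  rw [map_sum]
  congr 1; ext i
  have h : Pi.single i (v i) = v i • (Pi.single i 1 : E) := by
    rw [← Pi.single_smul, smul_eq_mul, mul_one]
  rw [h, L.map_smul, smul_eq_mul]

lemma hf2 (hφ : ContDiff ℝ 2 φ) (x : E) : HasFDerivAt (fderiv ℝ φ) (f2 φ x) x := by
  have h1 : ContDiff ℝ 1 (fderiv ℝ φ) := hφ.fderiv_right (le_refl _)
  exact (h1.differentiable (by norm_num) x).hasFDerivAt

/-- derivative of grad -/
noncomputable def Bm (φ : (Fin n → ℝ) → ℝ) (x : E) : E →L[ℝ] E :=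
  ContinuousLinearMap.pi fun j => (f2 φ x).flip (Pi.single j 1)

lemma hgrad (hφ : ContDiff ℝ 2 φ) (x : E) : HasFDerivAt (grad φ) (Bm φ x) x := by
  rw [hasFDerivAt_pi']
  intro j
  have h1 : HasFDerivAt (fun y => (ContinuousLinearMap.apply ℝ ℝ (Pi.single j 1 : E)) (fderiv ℝ φ y))
      ((ContinuousLinearMap.apply ℝ ℝ (Pi.single j 1 : E)).comp (f2 φ x)) x :=
    (ContinuousLinearMap.apply ℝ ℝ (Pi.single j 1 : E)).hasFDerivAt.comp x (hf2 hφ x)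
  exact h1

lemma hessEq (hφ : ContDiff ℝ 2 φ) (x : E) (i j : Fin n) :
    hess φ x i j = f2 φ x (Pi.single i 1) (Pi.single j 1) := by
  have h : HasFDerivAt (fun y => grad φ y j)
      ((ContinuousLinearMap.proj j).comp (Bm φ x)) x := by
    have := (ContinuousLinearMap.proj (R := ℝ) (φ := fun _ : Fin n => ℝ) j).hasFDerivAt.comp x (hgrad hφ x)
    exact this
  simp only [hess, Matrix.of_apply]
  rw [h.fderiv]
  rfl

lemma f2symm (hφ : ContDiff ℝ 2 φ) (x : E) (v w : E) : f2 φ x v w = f2 φ x w v := by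
  have h := (hφ.contDiffAt (x := x)).isSymmSndFDerivAt (n := 2) (by norm_num)
  exact h v w

end Aux

section Aux2
variable {n : ℕ} {φ : (Fin n → ℝ) → ℝ}
local notation "E" => Fin n → ℝ

/-- derivative of T = id + grad φ -/
noncomputable def Tm (φ : (Fin n → ℝ) → ℝ) (x : E) : E →L[ℝ] E :=
  ContinuousLinearMap.id ℝ E + Bm φ x

lemma hT (hφ : ContDiff ℝ 2 φ) (x : E) :
    HasFDerivAt (fun y => y + grad φ y) (Tm φ x) x :=
  (hasFDerivAt_id x).add (hgrad hφ x)

lemma detEq (hφ : ContDiff ℝ 2 φ) (x : E) :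
    (Tm φ x).det = (1 + hess φ x).det := by
  rw [ContinuousLinearMap.det, ← LinearMap.det_toMatrix']
  congr 1
  ext i j
  rw [LinearMap.toMatrix'_apply]
  have hsj : (fun j' => if j' = j then (1:ℝ) else 0) = (Pi.single j 1 : E) := by
    funext j'; simp [Pi.single_apply]
  have h0 : (Tm φ x) (Pi.single j 1) i
      = (Pi.single j 1 : E) i + f2 φ x (Pi.single j 1) (Pi.single i 1) := by
    simp [Tm, Bm]
  rw [ContinuousLinearMap.coe_coe, h0, f2symm hφ, ← hessEq hφ]
  simp [Matrix.one_apply, Pi.single_apply, eq_comm]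

/-- the quadratic form of 1 + hess equals |v|² + f2 v v -/
lemma quadEq (hφ : ContDiff ℝ 2 φ) (x v : E) :
    v ⬝ᵥ ((1 + hess φ x) *ᵥ v) = (∑ i, v i * v i) + f2 φ x v v := by
  have hv : ∀ w : E, f2 φ x w v = ∑ j, v j * f2 φ x w (Pi.single j 1) := by
    intro w; exact clm_expand _ v
  have hvv : f2 φ x v v = ∑ i, v i * f2 φ x (Pi.single i 1) v := by
    have := clm_expand ((f2 φ x).flip v) v
    simpa using this
  rw [hvv]
  simp only [dotProduct, Matrix.add_mulVec, Matrix.one_mulVec, Pi.add_apply,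
    Matrix.mulVec, dotProduct]
  rw [← Finset.sum_add_distrib]
  congr 1; ext i
  rw [hv (Pi.single i 1)]
  have hrow : ∑ j, (1 + hess φ x) i j * v j
      = v i + ∑ j, v j * f2 φ x (Pi.single i 1) (Pi.single j 1) := by
    simp only [Matrix.add_apply, Matrix.one_apply, hessEq hφ, add_mul, ite_mul, one_mul,
      zero_mul]
    rw [Finset.sum_add_distrib]
    congr 1
    · simp
    · exact Finset.sum_congr rfl fun j _ => mul_comm _ _
  rw [hrow, mul_add]

/-- 1-d derivative facts -/
lemma hDeriv1 (hφ : ContDiff ℝ 2 φ) (x v : E) (t : ℝ) :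
    HasDerivAt (fun s => (∑ i, (x + s • v) i ^ 2) / 2 + φ (x + s • v))
      ((∑ i, (x + t • v) i * v i) + fderiv ℝ φ (x + t • v) v) t := by
  have hγ : HasDerivAt (fun s : ℝ => x + s • v) v t := by
    simpa using ((hasDerivAt_id t).smul_const v).const_add x
  have h1 : HasDerivAt (fun s => (∑ i, (x + s • v) i ^ 2) / 2)
      (∑ i, (x + t • v) i * v i) t := by
    have : HasDerivAt (fun s => ∑ i, (x + s • v) i ^ 2)
        (∑ i, 2 * (x + t • v) i * v i) t := by
      apply HasDerivAt.fun_sum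
      intro i _
      have hc : HasDerivAt (fun s : ℝ => (x + s • v) i) (v i) t := by
        simpa [mul_comm] using ((hasDerivAt_id t).const_mul (v i)).const_add (x i)
      simpa [mul_comm, mul_assoc] using (hc.fun_pow 2)
    have := this.div_const 2
    refine this.congr_deriv ?_
    rw [Finset.sum_div]
    congr 1; ext i; ring
  have h2 : HasDerivAt (fun s => φ (x + s • v)) (fderiv ℝ φ (x + t • v) v) t := by
    have hd : HasFDerivAt φ (fderiv ℝ φ (x + t • v)) (x + t • v) :=
      (hφ.differentiable (by norm_num) _).hasFDerivAt
    exact hd.comp_hasDerivAt t hγ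
  exact h1.add h2

lemma hDeriv2 (hφ : ContDiff ℝ 2 φ) (x v : E) (t : ℝ) :
    HasDerivAt (fun s => (∑ i, (x + s • v) i * v i) + fderiv ℝ φ (x + s • v) v)
      ((∑ i, v i * v i) + f2 φ (x + t • v) v v) t := by
  have hγ : HasDerivAt (fun s : ℝ => x + s • v) v t := by
    simpa using ((hasDerivAt_id t).smul_const v).const_add x
  have h1 : HasDerivAt (fun s => ∑ i, (x + s • v) i * v i) (∑ i, v i * v i) t := by
    apply HasDerivAt.fun_sum
    intro i _
    have hc : HasDerivAt (fun s : ℝ => (x + s • v) i) (v i) t := by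
      simpa [mul_comm] using ((hasDerivAt_id t).const_mul (v i)).const_add (x i)
    simpa [mul_comm] using hc.mul_const (v i)
  have h2 : HasDerivAt (fun s => fderiv ℝ φ (x + s • v) v) (f2 φ (x + t • v) v v) t := by
    have hA : HasDerivAt (fun s => fderiv ℝ φ (x + s • v)) (f2 φ (x + t • v) v) t :=
      (hf2 hφ (x + t • v)).comp_hasDerivAt t hγ
    have := ((ContinuousLinearMap.apply ℝ ℝ v).hasFDerivAt.comp_hasDerivAt t hA)
    exact this
  exact h1.add h2

end Aux2

section Aux3
variable {n : ℕ} {φ : (Fin n → ℝ) → ℝ}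
local notation "E" => Fin n → ℝ

lemma deriv_nonneg_of_monotone {ψ : ℝ → ℝ} (hm : Monotone ψ) {d t : ℝ}
    (hd : HasDerivAt ψ d t) : 0 ≤ d := by
  have h1 : Tendsto (slope ψ t) (𝓝[>] t) (𝓝 d) :=
    (hasDerivAt_iff_tendsto_slope.1 hd).mono_left
      (nhdsWithin_mono _ fun y hy => ne_of_gt hy)
  refine ge_of_tendsto h1 ?_
  filter_upwards [self_mem_nhdsWithin] with y hy
  have : t < y := hy
  rw [slope_def_field]
  have h2 : ψ t ≤ ψ y := hm this.le
  have h3 : 0 < y - t := sub_pos.2 this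
  exact div_nonneg (sub_nonneg.2 h2) h3.le

lemma convex_line (hconv : ConvexOn ℝ Set.univ fun x : E => (∑ i, x i ^ 2) / 2 + φ x)
    (x v : E) :
    ConvexOn ℝ Set.univ fun s : ℝ => (∑ i, (x + s • v) i ^ 2) / 2 + φ (x + s • v) := by
  have A : ConvexOn ℝ (AffineMap.lineMap x (x + v) ⁻¹' Set.univ)
      ((fun z : E => (∑ i, z i ^ 2) / 2 + φ z) ∘ (AffineMap.lineMap x (x + v) : ℝ →ᵃ[ℝ] E)) :=
    hconv.comp_affineMap _
  have hpre : (AffineMap.lineMap x (x + v) : ℝ →ᵃ[ℝ] E) ⁻¹' Set.univ = Set.univ := by simp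
  rw [hpre] at A
  have heq : ((fun z : E => (∑ i, z i ^ 2) / 2 + φ z) ∘ (AffineMap.lineMap x (x + v) : ℝ →ᵃ[ℝ] E))
      = fun s : ℝ => (∑ i, (x + s • v) i ^ 2) / 2 + φ (x + s • v) := by
    funext s
    have : (AffineMap.lineMap x (x + v) : ℝ →ᵃ[ℝ] E) s = x + s • v := by
      simp [AffineMap.lineMap_apply]
      abel
    simp [Function.comp, this]
  rwa [heq] at A

lemma psd (hφ : ContDiff ℝ 2 φ)
    (hconv : ConvexOn ℝ Set.univ fun x : E => (∑ i, x i ^ 2) / 2 + φ x)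
    (x v : E) : 0 ≤ v ⬝ᵥ ((1 + hess φ x) *ᵥ v) := by
  rw [quadEq hφ]
  have hψmono : Monotone fun s : ℝ => (∑ i, (x + s • v) i * v i) + fderiv ℝ φ (x + s • v) v := by
    have hmono : MonotoneOn
        (deriv fun s : ℝ => (∑ i, (x + s • v) i ^ 2) / 2 + φ (x + s • v)) Set.univ :=
      ConvexOn.monotoneOn_deriv (convex_line hconv x v)
        (fun s _ => (hDeriv1 hφ x v s).differentiableAt)
    intro s t hst
    have h := hmono (Set.mem_univ s) (Set.mem_univ t) hst
    rwa [(hDeriv1 hφ x v s).deriv, (hDeriv1 hφ x v t).deriv] at h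
  have h0 := deriv_nonneg_of_monotone hψmono (hDeriv2 hφ x v 0)
  have hx0 : x + (0:ℝ) • v = x := by simp
  rw [hx0] at h0
  exact h0

lemma pd (hφ : ContDiff ℝ 2 φ)
    (hconv : ConvexOn ℝ Set.univ fun x : E => (∑ i, x i ^ 2) / 2 + φ x)
    (hinv : ∀ x, IsUnit (1 + hess φ x)) (x : E) : (1 + hess φ x).PosDef := by
  have hherm : (1 + hess φ x).IsHermitian := by
    rw [Matrix.IsHermitian]
    ext i j
    simp only [Matrix.conjTranspose_apply, Matrix.add_apply, Matrix.one_apply, star_trivial]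
    rw [hessEq hφ, hessEq hφ, f2symm hφ x (Pi.single j 1) (Pi.single i 1)]
    by_cases hij : i = j
    · simp [hij]
    · simp [hij, Ne.symm hij]
  refine Matrix.PosDef.of_dotProduct_mulVec_pos hherm fun v hv => ?_
  have hs : star v = v := by simp
  rw [hs]
  rcases lt_or_eq_of_le (psd hφ hconv x v) with h | h
  · exact h
  · exfalso
    have hsemi : (1 + hess φ x).PosSemidef :=
        Matrix.posSemidef_iff_dotProduct_mulVec.mpr ⟨hherm, fun w => by simpa using psd hφ hconv x w⟩
    have h0 : (1 + hess φ x) *ᵥ v = 0 := by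
      rw [← hsemi.dotProduct_mulVec_zero_iff v, hs, ← h]
    have hdet : (1 + hess φ x).det ≠ 0 := by
      have := (Matrix.isUnit_iff_isUnit_det _).1 (hinv x)
      exact this.ne_zero
    exact hv (Matrix.eq_zero_of_mulVec_eq_zero hdet h0)

lemma detPos (hφ : ContDiff ℝ 2 φ)
    (hconv : ConvexOn ℝ Set.univ fun x : E => (∑ i, x i ^ 2) / 2 + φ x)
    (hinv : ∀ x, IsUnit (1 + hess φ x)) (x : E) : 0 < (1 + hess φ x).det :=
  (pd hφ hconv hinv x).det_pos

lemma Tinj (hφ : ContDiff ℝ 2 φ)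
    (hconv : ConvexOn ℝ Set.univ fun x : E => (∑ i, x i ^ 2) / 2 + φ x)
    (hinv : ∀ x, IsUnit (1 + hess φ x)) :
    Function.Injective fun y : E => y + grad φ y := by
  intro a b hab
  by_contra hne
  set v : E := b - a with hvdef
  have hv : v ≠ 0 := sub_ne_zero.2 (Ne.symm hne)
  -- ψ s = ⟨T(a + s v), v⟩ is strictly monotone
  set ψ : ℝ → ℝ := fun s => (∑ i, (a + s • v) i * v i) + fderiv ℝ φ (a + s • v) v with hψdef
  have hψd : ∀ t, HasDerivAt ψ ((∑ i, v i * v i) + f2 φ (a + t • v) v v) t :=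
    fun t => hDeriv2 hφ a v t
  have hpos : ∀ t : ℝ, 0 < deriv ψ t := by
    intro t
    rw [(hψd t).deriv]
    have := (pd hφ hconv hinv (a + t • v)).dotProduct_mulVec_pos hv
    have hq := quadEq hφ (a + t • v) v
    simp only [star_trivial] at this
    rw [hq] at this
    exact this
  have hsm : StrictMono ψ :=
    strictMono_of_deriv_pos hpos
  have h01 : ψ 0 < ψ 1 := hsm zero_lt_one
  -- but ψ 0 = ⟨T a, v⟩ and ψ 1 = ⟨T b, v⟩ which are equal
  have he0 : ψ 0 = (∑ i, a i * v i) + fderiv ℝ φ a v := by simp [hψdef]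
  have hab' : a + v = b := by rw [hvdef]; abel
  have he1 : ψ 1 = (∑ i, b i * v i) + fderiv ℝ φ b v := by
    simp only [hψdef, one_smul, hab']
  have hTv : ∀ z : E, (∑ i, z i * v i) + fderiv ℝ φ z v = ∑ i, (z + grad φ z) i * v i := by
    intro z
    rw [clm_expand (fderiv ℝ φ z) v, ← Finset.sum_add_distrib]
    congr 1; ext i
    simp [grad]
    ring
  have hab2 : a + grad φ a = b + grad φ b := hab
  rw [he0, he1, hTv a, hTv b, hab2] at h01
  exact lt_irrefl _ h01
end Aux3


/-- The forward Monge potential `φ` solves the Gaussian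
Monge–Ampère equation: for `ρ`-a.e. `x`,
`e^{−f(x)} = e^{−g(T(x))}·det(I + Hess φ(x))·exp(−⟨x, ∇φ(x)⟩ − |∇φ(x)|²/2)`,
where `T = id + ∇φ` pushes `ρ = e^{−f}·β` forward to `ν = e^{−g}·β`. -/
theorem monge_ampere_forward (n : ℕ)
    (f g φ : (Fin n → ℝ) → ℝ) (hf : Measurable f) (hg : Measurable g)
    (hφ : ContDiff ℝ 2 φ)
    (ρ ν : Measure (Fin n → ℝ))
    (hρ : ρ = (stdGaussian n).withDensity fun x => ENNReal.ofReal (Real.exp (-f x)))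
    (hν : ν = (stdGaussian n).withDensity fun x => ENNReal.ofReal (Real.exp (-g x)))
    (hρprob : IsProbabilityMeasure ρ) (hνprob : IsProbabilityMeasure ν)
    (hconv : ConvexOn ℝ Set.univ fun x => (∑ i, x i ^ 2) / 2 + φ x)
    (hinv : ∀ x, IsUnit (1 + hess φ x))
    (hpush : Measure.map (fun x => x + grad φ x) ρ = ν) :
    ∀ᵐ x ∂ρ, Real.exp (-f x)
      = Real.exp (-g (x + grad φ x)) * (1 + hess φ x).det
        * Real.exp (-(∑ i, x i * grad φ x i) - (∑ i, grad φ x i ^ 2) / 2) := by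
  classical
  set T : (Fin n → ℝ) → (Fin n → ℝ) := fun x => x + grad φ x with hTdef
  set C : ℝ := (2 * π) ^ (-(n : ℝ) / 2) with hCdef
  have hC : 0 < C := by
    apply Real.rpow_pos_of_pos
    positivity
  -- densities
  set w : (Fin n → ℝ) → ℝ≥0∞ := fun x => ENNReal.ofReal (C * Real.exp (-(∑ i, x i ^ 2) / 2))
    with hwdef
  set F : (Fin n → ℝ) → ℝ≥0∞ := fun x => w x * ENNReal.ofReal (Real.exp (-f x)) with hFdef
  set G : (Fin n → ℝ) → ℝ≥0∞ := fun x => w x * ENNReal.ofReal (Real.exp (-g x)) with hGdef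
  have hsum_meas : Measurable fun y : Fin n → ℝ => ∑ i, y i ^ 2 := by fun_prop
  have hw_meas : Measurable w := by fun_prop
  have hF_meas : Measurable F := by fun_prop
  have hG_meas : Measurable G := by fun_prop
  have hρform : ρ = volume.withDensity F := by
    rw [hρ, stdGaussian, ← withDensity_mul _ hw_meas (by fun_prop)]
    rfl
  have hνform : ν = volume.withDensity G := by
    rw [hν, stdGaussian, ← withDensity_mul _ hw_meas (by fun_prop)]
    rfl
  -- T facts
  have hTcont : Continuous T := by
    rw [continuous_iff_continuousAt]
    exact fun x => (hT hφ x).continuousAt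
  have hTinj : Function.Injective T := Tinj hφ hconv hinv
  have hTmeas : Measurable T := hTcont.measurable
  have hembed : MeasurableEmbedding T := hTcont.measurableEmbedding hTinj
  -- determinant
  have hdetpos : ∀ x, 0 < (1 + hess φ x).det := detPos hφ hconv hinv
  have hdet : ∀ x, ENNReal.ofReal |(Tm φ x).det| = ENNReal.ofReal ((1 + hess φ x).det) := by
    intro x
    rw [detEq hφ, abs_of_pos (hdetpos x)]
  have hdet_cont : Continuous fun x => (1 + hess φ x).det := by
    have hf2c : Continuous (f2 φ) := by
      have h1 : ContDiff ℝ 1 (fderiv ℝ φ) := hφ.fderiv_right (le_refl _)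
      have h0 : ContDiff ℝ 0 (f2 φ) := h1.fderiv_right (by norm_num)
      exact h0.continuous
    have hentry : ∀ i j, Continuous fun x => (1 + hess φ x) i j := by
      intro i j
      have : Continuous fun x => f2 φ x (Pi.single i 1) (Pi.single j 1) :=
        (hf2c.clm_apply continuous_const).clm_apply continuous_const
      have heq : (fun x => (1 + hess φ x) i j)
          = fun x => (1 : Matrix (Fin n) (Fin n) ℝ) i j + f2 φ x (Pi.single i 1) (Pi.single j 1) := by
        funext x
        rw [Matrix.add_apply, hessEq hφ]
      rw [heq]
      exact continuous_const.add this
    exact Continuous.matrix_det (continuous_matrix hentry)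
  set R : (Fin n → ℝ) → ℝ≥0∞ :=
    fun x => ENNReal.ofReal ((1 + hess φ x).det) * G (T x) with hRdef
  have hR_meas : Measurable R :=
    (hdet_cont.measurable.ennreal_ofReal).mul (hG_meas.comp hTmeas)
  -- the set-integral identity
  have hkey : ∀ A : Set (Fin n → ℝ), MeasurableSet A →
      ∫⁻ x in A, F x = ∫⁻ x in A, R x := by
    intro A hA
    have hTA : MeasurableSet (T '' A) := hembed.measurableSet_image' hA
    have h1 : ∫⁻ x in A, F x = ρ A := by rw [hρform, withDensity_apply F hA]
    have h2 : ρ A = ν (T '' A) := by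
      rw [← hpush, Measure.map_apply hTmeas hTA, Set.preimage_image_eq A hTinj]
    have h3 : ν (T '' A) = ∫⁻ y in T '' A, G y := by rw [hνform, withDensity_apply G hTA]
    have h4 : ∫⁻ y in T '' A, G y
        = ∫⁻ x in A, ENNReal.ofReal |(Tm φ x).det| * G (T x) :=
      lintegral_image_eq_lintegral_abs_det_fderiv_mul volume hA
        (fun x _ => (hT hφ x).hasFDerivWithinAt) (hTinj.injOn) G
    have h5 : ∫⁻ x in A, ENNReal.ofReal |(Tm φ x).det| * G (T x) = ∫⁻ x in A, R x := by
      apply lintegral_congr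
      intro x
      rw [hRdef, hdet x]
    rw [h1, h2, h3, h4, h5]
  have hae_vol : F =ᵐ[volume] R :=
    ae_eq_of_forall_setLIntegral_eq_of_sigmaFinite hF_meas hR_meas
      fun A hA _ => hkey A hA
  have hac : ρ ≪ volume := by
    rw [hρform]; exact withDensity_absolutelyContinuous volume F
  have hae : ∀ᵐ x ∂ρ, F x = R x := hac.ae_le hae_vol
  filter_upwards [hae] with x hx
  -- pointwise computation
  set d : ℝ := (1 + hess φ x).det with hddef
  set a : ℝ := ∑ i, x i ^ 2 with hadef
  set b : ℝ := ∑ i, x i * grad φ x i with hbdef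
  set cg : ℝ := ∑ i, grad φ x i ^ 2 with hcgdef
  have hsumT : ∑ i, (T x) i ^ 2 = a + 2 * b + cg := by
    rw [hadef, hbdef, hcgdef]
    simp only [← Finset.sum_add_distrib, Finset.mul_sum]
    apply Finset.sum_congr rfl
    intro i _
    have : T x i = x i + grad φ x i := rfl
    rw [this]
    ring
  have hx' : C * Real.exp (-a / 2) * Real.exp (-f x)
      = d * (C * Real.exp (-(a + 2 * b + cg) / 2) * Real.exp (-g (T x))) := by
    have hl : F x = ENNReal.ofReal (C * Real.exp (-a / 2) * Real.exp (-f x)) := by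
      simp only [hFdef, hwdef]
      rw [← ENNReal.ofReal_mul (by positivity)]
    have hr : R x = ENNReal.ofReal
        (d * (C * Real.exp (-(a + 2 * b + cg) / 2) * Real.exp (-g (T x)))) := by
      simp only [hRdef, hGdef, hwdef]
      rw [hsumT, ← ENNReal.ofReal_mul (by positivity),
        ← ENNReal.ofReal_mul (le_of_lt (hdetpos x))]
    rw [hl, hr] at hx
    exact (ENNReal.ofReal_eq_ofReal_iff (by positivity)
      (mul_nonneg (hdetpos x).le (by positivity))).1 hx
  have hexp : Real.exp (-(a + 2 * b + cg) / 2)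
      = Real.exp (-a / 2) * Real.exp (-b - cg / 2) := by
    rw [← Real.exp_add]
    congr 1
    ring
  have hne : C * Real.exp (-a / 2) ≠ 0 := by positivity
  apply mul_left_cancel₀ hne
  rw [hx', hexp]
  ring
end

section
/- Let f, g : ℝ^n → ℝ be measurable functions such that ρ = e^{−f}·β and ν = e^{−g}·β are probability measures. Let ψ : ℝ^n → ℝ be a C² function such that y ↦ |y|²/2 + ψ(y) is convex, the matrix I + Hess ψ(y) is invertible for every y, and the map S = id + ∇ψ pushes ν forward to ρ. Then the backward potential ψ solves the Gaussian Monge–Ampère equation: for ν-a.e. y, e^{−g(y)} = e^{−f(S(y))}·det(I + Hess ψ(y))·exp(−⟨y, ∇ψ(y)⟩ − |∇ψ(y)|²/2). Equivalently, with det₂(I + A) := det(I + A)·e^{−trace(A)} and (Lψ)(y) = ⟨y, ∇ψ(y)⟩ − Δψ(y), one has e^{−g} = e^{−f∘S}·det₂(I + Hess ψ)·exp(−Lψ − |∇ψ|²/2) ν-a.e. (This is the finite-dimensional form of Theorem 4.2.) -/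
open MeasureTheory Real Filter Topology

section Deriv
variable {n : ℕ} {ψ : (Fin n → ℝ) → ℝ}

lemma single_eq (i : Fin n) : (fun j => if i = j then (1:ℝ) else 0) = Pi.single i 1 := by
  ext j; simp [Pi.single_apply, eq_comm]

lemma hψ1 (hψ : ContDiff ℝ 2 ψ) : ContDiff ℝ 1 (fderiv ℝ ψ) :=
  ((contDiff_succ_iff_fderiv (n := 1)).mp (by exact_mod_cast hψ)).2.2

lemma diff_psi (hψ : ContDiff ℝ 2 ψ) : Differentiable ℝ ψ := hψ.differentiable (by norm_num)

lemma diff_Dpsi (hψ : ContDiff ℝ 2 ψ) : Differentiable ℝ (fderiv ℝ ψ) :=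
  (hψ1 hψ).differentiable one_ne_zero

lemma cont_D2 (hψ : ContDiff ℝ 2 ψ) : Continuous (fderiv ℝ (fderiv ℝ ψ)) :=
  (hψ1 hψ).continuous_fderiv one_ne_zero

lemma clm_eq_sum (ℓ : (Fin n → ℝ) →L[ℝ] ℝ) (u : Fin n → ℝ) :
    ℓ u = ∑ i, u i * ℓ (Pi.single i 1) := by
  conv_lhs => rw [pi_eq_sum_univ u]
  rw [map_sum]
  exact Finset.sum_congr rfl fun i _ => by rw [single_eq i, ℓ.map_smul, smul_eq_mul]

lemma fderiv_apply_eq (y u : Fin n → ℝ) : fderiv ℝ ψ y u = ∑ i, u i * grad ψ y i :=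
  clm_eq_sum _ u

lemma hess_apply (hψ : ContDiff ℝ 2 ψ) (y : Fin n → ℝ) (i j : Fin n) :
    hess ψ y i j = fderiv ℝ (fderiv ℝ ψ) y (Pi.single i 1) (Pi.single j 1) := by
  have hd : DifferentiableAt ℝ (fderiv ℝ ψ) y := diff_Dpsi hψ y
  show fderiv ℝ (fun z => fderiv ℝ ψ z (Pi.single j 1)) y (Pi.single i 1) = _
  rw [fderiv_clm_apply hd (differentiableAt_const _)]
  simp

lemma hess_symm (hψ : ContDiff ℝ 2 ψ) (y : Fin n → ℝ) (i j : Fin n) :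
    hess ψ y i j = hess ψ y j i := by
  rw [hess_apply hψ, hess_apply hψ]
  exact second_derivative_symmetric (fun z => (diff_psi hψ z).hasFDerivAt)
    ((diff_Dpsi hψ y).hasFDerivAt) _ _

/-- the derivative of `S = id + grad ψ` -/
noncomputable def Sd (ψ : (Fin n → ℝ) → ℝ) (y : Fin n → ℝ) :
    (Fin n → ℝ) →L[ℝ] (Fin n → ℝ) :=
  ContinuousLinearMap.id ℝ _ +
    ContinuousLinearMap.pi fun i => (fderiv ℝ (fderiv ℝ ψ) y).flip (Pi.single i 1)

lemma Sd_apply (y u : Fin n → ℝ) (i : Fin n) :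
    Sd ψ y u i = u i + fderiv ℝ (fderiv ℝ ψ) y u (Pi.single i 1) := rfl

lemma hasFDerivAt_S (hψ : ContDiff ℝ 2 ψ) (y : Fin n → ℝ) :
    HasFDerivAt (fun z => z + grad ψ z) (Sd ψ y) y := by
  have h1 : HasFDerivAt (grad ψ)
      (ContinuousLinearMap.pi fun i => (fderiv ℝ (fderiv ℝ ψ) y).flip (Pi.single i 1)) y := by
    rw [hasFDerivAt_pi']
    intro i
    rw [ContinuousLinearMap.proj_pi]
    have := ((diff_Dpsi hψ y).hasFDerivAt).clm_apply (hasFDerivAt_const (Pi.single i 1) y)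
    simpa [grad] using this
  simpa [Sd] using (hasFDerivAt_id y).add h1

lemma Sd_det (hψ : ContDiff ℝ 2 ψ) (y : Fin n → ℝ) :
    (Sd ψ y).det = (1 + hess ψ y).det := by
  have h : LinearMap.toMatrix' ((Sd ψ y) : (Fin n → ℝ) →ₗ[ℝ] (Fin n → ℝ))
      = (1 + hess ψ y).transpose := by
    ext i j
    rw [LinearMap.toMatrix'_apply]
    have hsingle : (fun j' => if j' = j then (1:ℝ) else 0) = Pi.single j 1 := by
      ext j'; simp [Pi.single_apply]
    show Sd ψ y (Pi.single j 1) i = _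
    rw [Sd_apply, Matrix.transpose_apply, Matrix.add_apply, ← hess_apply hψ]
    simp [Matrix.one_apply, Pi.single_apply, eq_comm]
  rw [ContinuousLinearMap.det, ← LinearMap.det_toMatrix', h, Matrix.det_transpose]

end Deriv

section Conv
variable {n : ℕ} {ψ : (Fin n → ℝ) → ℝ}

/-- S as abbreviation -/
noncomputable def Smap (ψ : (Fin n → ℝ) → ℝ) (y : Fin n → ℝ) : Fin n → ℝ := y + grad ψ y

lemma hasDerivAt_line (hψ : ContDiff ℝ 2 ψ) (y v : Fin n → ℝ) (t : ℝ) :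
    HasDerivAt (fun t : ℝ => (∑ i, (y + t • v) i ^ 2) / 2 + ψ (y + t • v))
      (∑ i, Smap ψ (y + t • v) i * v i) t := by
  have hline : HasDerivAt (fun t : ℝ => y + t • v) v t := by
    simpa using ((hasDerivAt_id t).smul_const v).const_add y
  have h1 : HasDerivAt (fun t : ℝ => (∑ i, (y + t • v) i ^ 2) / 2)
      (∑ i, (y + t • v) i * v i) t := by
    have hderiv : ∀ i : Fin n, HasDerivAt (fun t : ℝ => (y i + t * v i) ^ 2)
        (2 * (y i + t * v i) * v i) t := by
      intro i
      have hb : HasDerivAt (fun t : ℝ => y i + t * v i) (v i) t := by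
        simpa using ((hasDerivAt_id t).mul_const (v i)).const_add (y i)
      simpa [mul_comm, mul_assoc] using (hb.fun_pow 2)
    have hsum : HasDerivAt (fun t : ℝ => ∑ i, (y i + t * v i) ^ 2)
        (∑ i, 2 * (y i + t * v i) * v i) t := HasDerivAt.fun_sum fun i _ => hderiv i
    have hfun : (fun t : ℝ => (∑ i, (y + t • v) i ^ 2) / 2)
        = fun t : ℝ => (∑ i, (y i + t * v i) ^ 2) / 2 := by
      funext s; simp [smul_eq_mul]
    have hval : (∑ i, (y + t • v) i * v i) = (∑ i, 2 * (y i + t * v i) * v i) / 2 := by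
      rw [Finset.sum_div]
      refine Finset.sum_congr rfl fun i _ => ?_
      simp only [Pi.add_apply, Pi.smul_apply, smul_eq_mul]
      ring
    rw [hfun, hval]
    exact hsum.div_const 2
  have h2 : HasDerivAt (fun t : ℝ => ψ (y + t • v))
      (∑ i, v i * grad ψ (y + t • v) i) t := by
    have := (diff_psi hψ (y + t • v)).hasFDerivAt.comp_hasDerivAt t hline
    rwa [fderiv_apply_eq] at this
  have := h1.add h2
  rw [← Finset.sum_add_distrib] at this
  refine this.congr_deriv (Finset.sum_congr rfl fun i _ => ?_)
  simp only [Smap, Pi.add_apply]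
  ring

lemma mono_grad (hψ : ContDiff ℝ 2 ψ)
    (hconv : ConvexOn ℝ Set.univ fun y => (∑ i, y i ^ 2) / 2 + ψ y)
    (a b : Fin n → ℝ) : 0 ≤ ∑ i, (Smap ψ b i - Smap ψ a i) * (b i - a i) := by
  set v := b - a with hv
  set h : ℝ → ℝ := fun t => (∑ i, (a + t • v) i ^ 2) / 2 + ψ (a + t • v) with hh
  have hconvh : ConvexOn ℝ Set.univ h := by
    have := hconv.comp_affineMap
      (AffineMap.lineMap (k := ℝ) a b : ℝ →ᵃ[ℝ] (Fin n → ℝ))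
    simpa [hh, Function.comp_def, AffineMap.lineMap_apply, v,
      Set.preimage_univ, add_comm] using this
  have hd : ∀ t : ℝ, HasDerivAt h (∑ i, Smap ψ (a + t • v) i * v i) t :=
    fun t => hasDerivAt_line hψ a v t
  have hmono := hconvh.monotoneOn_deriv (fun t _ => (hd t).differentiableAt)
  have h01 := hmono (Set.mem_univ 0) (Set.mem_univ 1) zero_le_one
  rw [(hd 0).deriv, (hd 1).deriv] at h01
  have e0 : a + (0:ℝ) • v = a := by simp
  have e1 : a + (1:ℝ) • v = b := by simp [v]
  rw [e0, e1] at h01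
  have := sub_nonneg.mpr h01
  rw [← Finset.sum_sub_distrib] at this
  refine this.trans_eq (Finset.sum_congr rfl fun i _ => ?_)
  rw [hv, Pi.sub_apply]
  ring

lemma mono_F (hψ : ContDiff ℝ 2 ψ)
    (hconv : ConvexOn ℝ Set.univ fun y => (∑ i, y i ^ 2) / 2 + ψ y)
    (y v : Fin n → ℝ) : Monotone (fun t : ℝ => ∑ i, Smap ψ (y + t • v) i * v i) := by
  intro t s hts
  rcases eq_or_lt_of_le hts with rfl | h
  · exact le_rfl
  have key := mono_grad hψ hconv (y + t • v) (y + s • v)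
  have : (0:ℝ) ≤ (s - t) * ∑ i, (Smap ψ (y + s • v) i - Smap ψ (y + t • v) i) * v i := by
    rw [Finset.mul_sum]
    convert key using 2 with i
    simp [smul_eq_mul]
    ring
  have h2 : (0:ℝ) ≤ ∑ i, (Smap ψ (y + s • v) i - Smap ψ (y + t • v) i) * v i :=
    nonneg_of_mul_nonneg_right this (by linarith)
  have := Finset.sum_sub_distrib (f := fun i => Smap ψ (y + s • v) i * v i)
    (g := fun i => Smap ψ (y + t • v) i * v i) (s := Finset.univ)
  simp only [sub_mul] at h2
  rw [this] at h2
  dsimp only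
  linarith [h2]

lemma hasDerivAt_F (hψ : ContDiff ℝ 2 ψ) (y v : Fin n → ℝ) (t : ℝ) :
    HasDerivAt (fun t : ℝ => ∑ i, Smap ψ (y + t • v) i * v i)
      (∑ i, Sd ψ (y + t • v) v i * v i) t := by
  have hline : HasDerivAt (fun t : ℝ => y + t • v) v t := by
    simpa using ((hasDerivAt_id t).smul_const v).const_add y
  have hS : HasDerivAt (fun t : ℝ => Smap ψ (y + t • v)) (Sd ψ (y + t • v) v) t :=
    by have := (hasFDerivAt_S hψ (y + t • v)).comp_hasDerivAt t hline; exact this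
  have : ∀ i : Fin n, HasDerivAt (fun t : ℝ => Smap ψ (y + t • v) i)
      (Sd ψ (y + t • v) v i) t := by
    intro i
    exact ((ContinuousLinearMap.proj i : (Fin n → ℝ) →L[ℝ] ℝ).hasFDerivAt.comp_hasDerivAt t hS)
  exact HasDerivAt.fun_sum fun i _ => (this i).mul_const (v i)

lemma nonneg_of_monotone_hasDerivAt {F : ℝ → ℝ} {a t : ℝ}
    (hm : Monotone F) (hd : HasDerivAt F a t) : 0 ≤ a := by
  have := hasDerivAt_iff_tendsto_slope.mp hd
  have h2 : Tendsto (slope F t) (𝓝[>] t) (𝓝 a) :=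
    this.mono_left (nhdsWithin_mono t fun u hu => ne_of_gt hu)
  refine ge_of_tendsto h2 ?_
  filter_upwards [self_mem_nhdsWithin] with u hu
  have htu : t < u := hu
  rw [slope_def_field]
  exact div_nonneg (sub_nonneg.mpr (hm htu.le)) (by linarith)

lemma quad_nonneg (hψ : ContDiff ℝ 2 ψ)
    (hconv : ConvexOn ℝ Set.univ fun y => (∑ i, y i ^ 2) / 2 + ψ y)
    (y v : Fin n → ℝ) : 0 ≤ ∑ i, Sd ψ y v i * v i := by
  have hd := hasDerivAt_F hψ y v 0
  have : y + (0:ℝ) • v = y := by simp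
  rw [this] at hd
  exact nonneg_of_monotone_hasDerivAt (mono_F hψ hconv y v) hd

lemma Sd_mulVec (hψ : ContDiff ℝ 2 ψ) (y v : Fin n → ℝ) (i : Fin n) :
    Sd ψ y v i = Matrix.mulVec (1 + hess ψ y) v i := by
  rw [Sd_apply]
  have : fderiv ℝ (fderiv ℝ ψ) y v (Pi.single i 1)
      = ∑ j, v j * hess ψ y j i := by
    have := clm_eq_sum ((fderiv ℝ (fderiv ℝ ψ) y).flip (Pi.single i 1)) v
    simp only [ContinuousLinearMap.flip_apply] at this
    rw [this]
    exact Finset.sum_congr rfl fun j _ => by rw [hess_apply hψ]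
  rw [this]
  have hswap : ∑ j, v j * hess ψ y j i = ∑ j, v j * hess ψ y i j :=
    Finset.sum_congr rfl fun j _ => by rw [hess_symm hψ y j i]
  rw [hswap]
  simp [Matrix.mulVec, dotProduct, Matrix.add_apply, Matrix.one_apply, add_mul, mul_add,
    Finset.sum_add_distrib, ite_mul, mul_ite, zero_mul, one_mul, mul_one, mul_zero,
    Finset.sum_ite_eq, mul_comm]

lemma posSemidef (hψ : ContDiff ℝ 2 ψ)
    (hconv : ConvexOn ℝ Set.univ fun y => (∑ i, y i ^ 2) / 2 + ψ y)
    (y : Fin n → ℝ) : (1 + hess ψ y).PosSemidef := by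
  refine Matrix.posSemidef_iff_dotProduct_mulVec.mpr ⟨?_, ?_⟩
  · show (1 + hess ψ y).conjTranspose = _
    ext i j
    simp only [Matrix.conjTranspose_apply, Matrix.add_apply, Matrix.one_apply, star_trivial]
    rw [hess_symm hψ y j i]
    congr 1
    simp [Matrix.one_apply, eq_comm]
  · intro x
    have := quad_nonneg hψ hconv y x
    rw [Finset.sum_congr rfl (fun i _ => by rw [Sd_mulVec hψ])] at this
    simpa [dotProduct, mul_comm] using this

end Conv

section Inj
variable {n : ℕ} {ψ : (Fin n → ℝ) → ℝ}

lemma injective_S (hψ : ContDiff ℝ 2 ψ)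
    (hconv : ConvexOn ℝ Set.univ fun y => (∑ i, y i ^ 2) / 2 + ψ y)
    (hinv : ∀ y, IsUnit (1 + hess ψ y)) :
    Function.Injective (Smap ψ) := by
  intro a b hab
  set v := b - a with hv
  set F : ℝ → ℝ := fun t => ∑ i, Smap ψ (a + t • v) i * v i with hF
  have hmono : Monotone F := mono_F hψ hconv a v
  have e0 : a + (0:ℝ) • v = a := by simp
  have e1 : a + (1:ℝ) • v = b := by simp [hv]
  have hF01 : F 1 = F 0 := by
    simp only [hF, e0, e1, hab]
  have hconst : ∀ t ∈ Set.Icc (0:ℝ) 1, F t = F 0 := fun t ht =>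
    le_antisymm (hF01 ▸ hmono ht.2) (hmono ht.1)
  have hnb : Set.Icc (0:ℝ) 1 ∈ 𝓝 (2⁻¹ : ℝ) := Icc_mem_nhds (by norm_num) (by norm_num)
  have heq : F =ᶠ[𝓝 (2⁻¹ : ℝ)] fun _ => F 0 := by
    filter_upwards [hnb] with t ht using hconst t ht
  have hd0 : HasDerivAt F 0 (2⁻¹ : ℝ) :=
    heq.hasDerivAt_iff.mpr (hasDerivAt_const _ _)
  set m := a + (2⁻¹:ℝ) • v with hm
  have hd : HasDerivAt F (∑ i, Sd ψ m v i * v i) (2⁻¹ : ℝ) := hasDerivAt_F hψ a v 2⁻¹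
  have hq0 : ∑ i, Sd ψ m v i * v i = 0 := hd.unique hd0
  have hqm : dotProduct (star v) (Matrix.mulVec (1 + hess ψ m) v) = 0 := by
    rw [← hq0]
    simp only [star_trivial, dotProduct]
    exact Finset.sum_congr rfl fun i _ => by rw [Sd_mulVec hψ, mul_comm]
  have hv0 : Matrix.mulVec (1 + hess ψ m) v = 0 :=
    ((posSemidef hψ hconv m).dotProduct_mulVec_zero_iff v).mp hqm
  have hdetu : IsUnit (1 + hess ψ m).det := (Matrix.isUnit_iff_isUnit_det _).mp (hinv m)
  have : v = 0 := by
    have := congrArg (Matrix.mulVec (1 + hess ψ m)⁻¹) hv0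
    rwa [Matrix.mulVec_mulVec, Matrix.nonsing_inv_mul _ hdetu, Matrix.one_mulVec,
      Matrix.mulVec_zero] at this
  have := sub_eq_zero.mp (hv ▸ this)
  exact this.symm

lemma det_pos_S (hψ : ContDiff ℝ 2 ψ)
    (hconv : ConvexOn ℝ Set.univ fun y => (∑ i, y i ^ 2) / 2 + ψ y)
    (hinv : ∀ y, IsUnit (1 + hess ψ y)) (y : Fin n → ℝ) :
    0 < (1 + hess ψ y).det := by
  have P := posSemidef hψ hconv y
  have hH : (1 + hess ψ y).IsHermitian := P.1
  have hnonneg : 0 ≤ (1 + hess ψ y).det := by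
    rw [hH.det_eq_prod_eigenvalues]
    apply Finset.prod_nonneg
    intro i _
    simpa using P.eigenvalues_nonneg i
  have hne : (1 + hess ψ y).det ≠ 0 := by
    have := (Matrix.isUnit_iff_isUnit_det _).mp (hinv y)
    exact this.ne_zero
  exact lt_of_le_of_ne hnonneg (Ne.symm hne)

lemma cont_grad (hψ : ContDiff ℝ 2 ψ) : Continuous (grad ψ) := by
  apply continuous_pi
  intro i
  exact ((hψ1 hψ).continuous).clm_apply continuous_const

lemma cont_S (hψ : ContDiff ℝ 2 ψ) : Continuous (Smap ψ) :=
  continuous_id.add (cont_grad hψ)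

lemma cont_hess (hψ : ContDiff ℝ 2 ψ) : Continuous fun y => hess ψ y := by
  apply continuous_matrix
  intro i j
  have : (fun y => hess ψ y i j)
      = fun y => fderiv ℝ (fderiv ℝ ψ) y (Pi.single i 1) (Pi.single j 1) := by
    funext y; exact hess_apply hψ y i j
  rw [this]
  exact ((cont_D2 hψ).clm_apply continuous_const).clm_apply continuous_const

lemma cont_det (hψ : ContDiff ℝ 2 ψ) : Continuous fun y => (1 + hess ψ y).det :=
  Continuous.matrix_det (continuous_const.add (cont_hess hψ))

end Inj
/-- (Finite-dimensional form of Theorem 4.2.) The backward Monge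
potential `ψ` solves the Gaussian Monge–Ampère equation: for `ν`-a.e. `y`,
`e^{−g(y)} = e^{−f(S(y))}·det(I + Hess ψ(y))·exp(−⟨y, ∇ψ(y)⟩ − |∇ψ(y)|²/2)`,
where `S = id + ∇ψ` pushes `ν = e^{−g}·β` forward to `ρ = e^{−f}·β`. -/
theorem monge_ampere_backward (n : ℕ)
    (f g ψ : (Fin n → ℝ) → ℝ) (hf : Measurable f) (hg : Measurable g)
    (hψ : ContDiff ℝ 2 ψ)
    (ρ ν : Measure (Fin n → ℝ))
    (hρ : ρ = (stdGaussian n).withDensity fun x => ENNReal.ofReal (Real.exp (-f x)))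
    (hν : ν = (stdGaussian n).withDensity fun x => ENNReal.ofReal (Real.exp (-g x)))
    (hρprob : IsProbabilityMeasure ρ) (hνprob : IsProbabilityMeasure ν)
    (hconv : ConvexOn ℝ Set.univ fun y => (∑ i, y i ^ 2) / 2 + ψ y)
    (hinv : ∀ y, IsUnit (1 + hess ψ y))
    (hpush : Measure.map (fun y => y + grad ψ y) ν = ρ) :
    ∀ᵐ y ∂ν, Real.exp (-g y)
      = Real.exp (-f (y + grad ψ y)) * (1 + hess ψ y).det
        * Real.exp (-(∑ i, y i * grad ψ y i) - (∑ i, grad ψ y i ^ 2) / 2) := by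
  classical
  set c : ℝ := (2 * π) ^ (-(n : ℝ) / 2) with hc
  have hcpos : 0 < c := Real.rpow_pos_of_pos (by positivity) _
  set Gd : (Fin n → ℝ) → ENNReal :=
    fun x => ENNReal.ofReal (c * Real.exp (-(∑ i, x i ^ 2) / 2)) with hGd
  have hGdcont : Continuous Gd := by
    apply ENNReal.continuous_ofReal.comp
    exact continuous_const.mul ((continuous_finset_sum _ fun i _ =>
      (continuous_apply i).pow 2).neg.div_const 2).rexp
  have hβ : stdGaussian n = volume.withDensity Gd := rfl
  -- the map S and its properties
  set S : (Fin n → ℝ) → (Fin n → ℝ) := Smap ψ with hS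
  have hSdef : ∀ y, S y = y + grad ψ y := fun _ => rfl
  have hScont : Continuous S := cont_S hψ
  have hSmeas : Measurable S := hScont.measurable
  have hSinj : Function.Injective S := injective_S hψ hconv hinv
  have hSemb : MeasurableEmbedding S := hScont.measurableEmbedding hSinj
  have hdetpos : ∀ y, 0 < (1 + hess ψ y).det := det_pos_S hψ hconv hinv
  -- densities w.r.t. Lebesgue
  set dν : (Fin n → ℝ) → ENNReal := fun y => ENNReal.ofReal (Real.exp (-g y)) * Gd y with hdν
  set dρ : (Fin n → ℝ) → ENNReal :=
    fun y => ENNReal.ofReal |(1 + hess ψ y).det|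
      * (ENNReal.ofReal (Real.exp (-f (S y))) * Gd (S y)) with hdρ
  have hmeas_expg : Measurable fun y => ENNReal.ofReal (Real.exp (-g y)) :=
    (Measurable.exp hg.neg).ennreal_ofReal
  have hmeas_expf : Measurable fun y => ENNReal.ofReal (Real.exp (-f (S y))) :=
    (Measurable.exp ((hf.comp hSmeas).neg)).ennreal_ofReal
  have hmeasdν : Measurable dν := hmeas_expg.mul hGdcont.measurable
  have hmeasdρ : Measurable dρ :=
    (((cont_det hψ).abs.measurable).ennreal_ofReal).mul
      (hmeas_expf.mul (hGdcont.comp hScont).measurable)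
  -- measure computations
  have hν_vol : ∀ {A : Set (Fin n → ℝ)}, MeasurableSet A → ν A = ∫⁻ y in A, dν y := by
    intro A hA
    rw [hν, withDensity_apply _ hA, hβ,
      setLIntegral_withDensity_eq_setLIntegral_mul _ hGdcont.measurable hmeas_expg hA]
    exact setLIntegral_congr_fun hA (fun y _ => by
      simp [dν, mul_comm])
  have hρ_vol : ∀ {A : Set (Fin n → ℝ)}, MeasurableSet A →
      ρ A = ∫⁻ y in A, ENNReal.ofReal (Real.exp (-f y)) * Gd y := by
    intro A hA
    rw [hρ, withDensity_apply _ hA, hβ,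
      setLIntegral_withDensity_eq_setLIntegral_mul _ hGdcont.measurable
        ((Measurable.exp hf.neg).ennreal_ofReal) (g := fun y => ENNReal.ofReal (Real.exp (-f y))) hA]
    exact setLIntegral_congr_fun hA (fun y _ => by
      simp [mul_comm])
  -- the key a.e. identity w.r.t. Lebesgue
  have key : dν =ᵐ[volume] dρ := by
    apply ae_eq_of_forall_setLIntegral_eq_of_sigmaFinite hmeasdν hmeasdρ
    intro A hA _
    -- RHS integral: change of variables
    have hCV := lintegral_image_eq_lintegral_abs_det_fderiv_mul volume hA
      (f' := fun x => Sd ψ x)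
      (fun x _ => (hasFDerivAt_S hψ x).hasFDerivWithinAt) (hSinj.injOn)
      (fun y => ENNReal.ofReal (Real.exp (-f y)) * Gd y)
    have hrw : ∫⁻ x in A, ENNReal.ofReal |(Sd ψ x).det|
          * (ENNReal.ofReal (Real.exp (-f (S x))) * Gd (S x)) = ∫⁻ x in A, dρ x := by
      apply lintegral_congr_ae
      refine Filter.Eventually.of_forall fun x => ?_
      simp only [Sd_det hψ, hdρ]
    have himg : MeasurableSet (S '' A) := hSemb.measurableSet_image' hA
    have hmap : ρ (S '' A) = ν A := by
      have hpush' : Measure.map S ν = ρ := hpush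
      rw [← hpush', Measure.map_apply hSmeas himg, Set.preimage_image_eq A hSinj]
    calc ∫⁻ y in A, dν y = ν A := (hν_vol hA).symm
      _ = ρ (S '' A) := hmap.symm
      _ = ∫⁻ y in S '' A, ENNReal.ofReal (Real.exp (-f y)) * Gd y := hρ_vol himg
      _ = ∫⁻ x in A, ENNReal.ofReal |(Sd ψ x).det|
            * (ENNReal.ofReal (Real.exp (-f (S x))) * Gd (S x)) := hCV
      _ = ∫⁻ x in A, dρ x := hrw
  -- transfer to ν-a.e.
  have hac : ν ≪ volume := by
    rw [hν, hβ]
    exact (withDensity_absolutelyContinuous _ _).trans (withDensity_absolutelyContinuous _ _)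
  have keyν : ∀ᵐ y ∂ν, dν y = dρ y := hac.ae_le key
  -- pointwise real computation
  filter_upwards [keyν] with y hy
  have hdet := hdetpos y
  set w : Fin n → ℝ := grad ψ y with hw
  have hSy : S y = y + grad ψ y := rfl
  -- convert the ENNReal identity to a real identity
  have h1 : dν y = ENNReal.ofReal (Real.exp (-g y) * (c * Real.exp (-(∑ i, y i ^ 2) / 2))) := by
    simp only [hdν, hGd]
    rw [← ENNReal.ofReal_mul (Real.exp_pos _).le]
  have h2 : dρ y = ENNReal.ofReal (|(1 + hess ψ y).det|
      * (Real.exp (-f (S y)) * (c * Real.exp (-(∑ i, (S y) i ^ 2) / 2)))) := by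
    simp only [hdρ, hGd]
    rw [← ENNReal.ofReal_mul (Real.exp_pos _).le, ← ENNReal.ofReal_mul (abs_nonneg _)]
  rw [h1, h2] at hy
  have hreal : Real.exp (-g y) * (c * Real.exp (-(∑ i, y i ^ 2) / 2))
      = |(1 + hess ψ y).det| * (Real.exp (-f (S y))
        * (c * Real.exp (-(∑ i, (S y) i ^ 2) / 2))) := by
    have hnn : 0 ≤ Real.exp (-g y) * (c * Real.exp (-(∑ i, y i ^ 2) / 2)) := by positivity
    exact (ENNReal.ofReal_eq_ofReal_iff hnn (by positivity)).mp hy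
  rw [abs_of_pos hdet] at hreal
  -- expand |S y|²
  have hsum : (∑ i, (S y) i ^ 2) = (∑ i, y i ^ 2) + 2 * (∑ i, y i * w i) + ∑ i, w i ^ 2 := by
    have : ∀ i, (S y) i ^ 2 = y i ^ 2 + 2 * (y i * w i) + w i ^ 2 := by
      intro i
      have : (S y) i = y i + w i := rfl
      rw [this]; ring
    rw [Finset.sum_congr rfl fun i _ => this i]
    simp [Finset.sum_add_distrib, Finset.mul_sum]
  have hexp : Real.exp (-(∑ i, (S y) i ^ 2) / 2)
      = Real.exp (-(∑ i, y i ^ 2) / 2)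
        * Real.exp (-(∑ i, y i * w i) - (∑ i, w i ^ 2) / 2) := by
    rw [← Real.exp_add]
    congr 1
    rw [hsum]; ring
  rw [hexp] at hreal
  -- cancel the positive factor
  have hcancel : (0:ℝ) < c * Real.exp (-(∑ i, y i ^ 2) / 2) := by positivity
  have hget : Real.exp (-g y) = (1 + hess ψ y).det * (Real.exp (-f (S y))
      * Real.exp (-(∑ i, y i * w i) - (∑ i, w i ^ 2) / 2)) := by
    apply mul_right_cancel₀ (ne_of_gt hcancel)
    rw [hreal]; ring
  rw [hget, hSy]
  ring
end

section
/- Let u : ℝ^n → (0,∞) be a bounded C¹ function with bounded gradient and let t > 0. Then the Fisher information contracts under the Ornstein–Uhlenbeck semigroup: ∫ |∇(Q_t u)(x)|² / (Q_t u)(x) dβ(x) ≤ e^{−2t} ∫ |∇u(x)|² / u(x) dβ(x), as an inequality in [0, ∞]. -/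
open MeasureTheory Real Filter Topology

/-- The Ornstein–Uhlenbeck semigroup on `ℝ^n`:
`(Q_t u)(x) = ∫ u(e^{−t}x + √(1−e^{−2t}) y) dβ(y)`. -/
noncomputable def ouSemigroup (n : ℕ) (t : ℝ) (u : (Fin n → ℝ) → ℝ)
    (x : Fin n → ℝ) : ℝ :=
  ∫ y, u (Real.exp (-t) • x + Real.sqrt (1 - Real.exp (-2 * t)) • y) ∂(stdGaussian n)

lemma cont_sumsq (n : ℕ) : Continuous fun x : Fin n → ℝ => ∑ i, x i ^ 2 := by fun_prop

lemma cont_density (n : ℕ) :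
    Continuous fun x : Fin n → ℝ => (2 * π) ^ (-(n : ℝ) / 2) * Real.exp (-(∑ i, x i ^ 2) / 2) := by
  fun_prop

lemma integrable_gauss1 : Integrable (fun y : ℝ => Real.exp (-(y ^ 2) / 2)) := by
  have := integrable_exp_neg_mul_sq (b := (1:ℝ)/2) (by norm_num)
  convert this using 2 with y
  ring_nf

lemma integrable_gaussN (n : ℕ) :
    Integrable (fun x : Fin n → ℝ => Real.exp (-(∑ i, x i ^ 2) / 2)) := by
  have h : (fun x : Fin n → ℝ => Real.exp (-(∑ i, x i ^ 2) / 2))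
      = fun x => ∏ i, Real.exp (-(x i ^ 2) / 2) := by
    ext x
    rw [← Real.exp_sum]
    congr 1
    rw [← Finset.sum_div, ← Finset.sum_neg_distrib]
  rw [h]
  exact Integrable.fintype_prod (fun _ => integrable_gauss1)

lemma integral_gaussN (n : ℕ) :
    ∫ x : Fin n → ℝ, Real.exp (-(∑ i, x i ^ 2) / 2) = (2 * π) ^ ((n : ℝ) / 2) := by
  have h : (fun x : Fin n → ℝ => Real.exp (-(∑ i, x i ^ 2) / 2))
      = fun x => ∏ i, Real.exp (-(x i ^ 2) / 2) := by
    ext x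
    rw [← Real.exp_sum]
    congr 1
    rw [← Finset.sum_div, ← Finset.sum_neg_distrib]
  rw [h, volume_pi, integral_fintype_prod_eq_pow (ι := Fin n) (fun y : ℝ => Real.exp (-(y ^ 2) / 2))]
  have h1 : ∫ y : ℝ, Real.exp (-(y ^ 2) / 2) = Real.sqrt (2 * π) := by
    have := integral_gaussian ((1:ℝ)/2)
    have h2 : (fun y : ℝ => Real.exp (-(1/2 : ℝ) * y ^ 2)) = fun y => Real.exp (-(y ^ 2) / 2) := by
      ext y; ring_nf
    rw [h2] at this
    rw [this]
    rw [show π / (1/2:ℝ) = 2 * π by ring]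
  rw [h1, Fintype.card_fin]
  rw [Real.sqrt_eq_rpow, ← Real.rpow_natCast ((2*π) ^ ((1:ℝ)/2)) n,
    ← Real.rpow_mul (by positivity)]
  congr 1
  ring

lemma lintegral_gaussN (n : ℕ) :
    ∫⁻ x : Fin n → ℝ, ENNReal.ofReal (Real.exp (-(∑ i, x i ^ 2) / 2))
      = ENNReal.ofReal ((2 * π) ^ ((n : ℝ) / 2)) := by
  rw [← ofReal_integral_eq_lintegral_ofReal (integrable_gaussN n)
    (Filter.Eventually.of_forall fun x => (Real.exp_pos _).le), integral_gaussN]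

instance stdGaussian_prob (n : ℕ) : IsProbabilityMeasure (stdGaussian n) := by
  constructor
  rw [stdGaussian, withDensity_apply _ MeasurableSet.univ, Measure.restrict_univ]
  have : ∀ x : Fin n → ℝ, ENNReal.ofReal ((2 * π) ^ (-(n : ℝ) / 2) * Real.exp (-(∑ i, x i ^ 2) / 2))
      = ENNReal.ofReal ((2 * π) ^ (-(n : ℝ) / 2)) * ENNReal.ofReal (Real.exp (-(∑ i, x i ^ 2) / 2)) := by
    intro x; rw [ENNReal.ofReal_mul (by positivity)]
  simp_rw [this]
  rw [lintegral_const_mul' _ _ ENNReal.ofReal_ne_top, lintegral_gaussN,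
    ← ENNReal.ofReal_mul (by positivity), ← Real.rpow_add (by positivity), neg_div,
    neg_add_cancel, Real.rpow_zero, ENNReal.ofReal_one]

lemma key_id {a s : ℝ} (hs : s ≠ 0) (has : a^2 + s^2 = 1) (x w : ℝ) :
    x^2 + (s⁻¹*(w - a*x))^2 = w^2 + (s⁻¹*(x - a*w))^2 := by
  field_simp
  linear_combination (x^2 - w^2) * has

lemma key_id_vec (n : ℕ) {a s : ℝ} (hs : s ≠ 0) (has : a^2 + s^2 = 1) (x w : Fin n → ℝ) :
    (∑ i, x i ^ 2) + ∑ i, ((s⁻¹ • (w - a • x)) i) ^ 2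
      = (∑ i, w i ^ 2) + ∑ i, ((s⁻¹ • (x - a • w)) i) ^ 2 := by
  rw [← Finset.sum_add_distrib, ← Finset.sum_add_distrib]
  refine Finset.sum_congr rfl fun i _ => ?_
  simpa using key_id hs has (x i) (w i)

lemma lintegral_comp_smul_pi (n : ℕ) {c : ℝ} (hc : c ≠ 0) {f : (Fin n → ℝ) → ENNReal}
    (hf : Measurable f) :
    ∫⁻ x : Fin n → ℝ, f (c • x) = ENNReal.ofReal |(c ^ n)⁻¹| * ∫⁻ x, f x := by
  have h := Measure.map_addHaar_smul (volume : Measure (Fin n → ℝ)) hc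
  rw [← lintegral_map hf (measurable_const_smul c), h, lintegral_smul_measure]
  congr 3
  simp [Module.finrank_pi]

section Invariance
variable (n : ℕ)

local notation "ρr" => fun x : Fin n → ℝ => (2 * π) ^ (-(n : ℝ) / 2) * Real.exp (-(∑ i, x i ^ 2) / 2)

lemma rhor_nonneg (x : Fin n → ℝ) : 0 ≤ ρr x := by positivity

lemma dens_id {a s : ℝ} (hs : s ≠ 0) (has : a^2 + s^2 = 1) (x w : Fin n → ℝ) :
    ρr x * ρr (s⁻¹ • (w - a • x)) = ρr w * ρr (s⁻¹ • (x - a • w)) := by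
  have e1 : ∀ S T : ℝ, (2*π) ^ (-(n:ℝ)/2) * Real.exp S * ((2*π) ^ (-(n:ℝ)/2) * Real.exp T)
      = ((2*π) ^ (-(n:ℝ)/2) * (2*π) ^ (-(n:ℝ)/2)) * Real.exp (S + T) := by
    intro S T; rw [Real.exp_add]; ring
  simp only [e1]
  congr 2
  have := key_id_vec n hs has x w
  linarith

lemma ou_invariance {a s : ℝ} (ha : 0 < a) (hs : 0 < s) (has : a^2 + s^2 = 1)
    {f : (Fin n → ℝ) → ENNReal} (hf : Measurable f) :
    ∫⁻ x, (∫⁻ y, f (a • x + s • y) ∂(stdGaussian n)) ∂(stdGaussian n)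
      = ∫⁻ z, f z ∂(stdGaussian n) := by
  have hρm : Measurable fun x : Fin n → ℝ => ENNReal.ofReal (ρr x) :=
    (cont_density n).measurable.ennreal_ofReal
  -- measurability of the full kernel on the product
  have hker : Measurable fun p : (Fin n → ℝ) × (Fin n → ℝ) => f (a • p.1 + s • p.2) :=
    hf.comp ((measurable_fst.const_smul a).add (measurable_snd.const_smul s))
  -- Step 1: unfold the withDensity structure
  have hinmeas : Measurable fun x : Fin n → ℝ =>
      ∫⁻ y, ENNReal.ofReal (ρr y) * f (a • x + s • y) ∂volume :=
    Measurable.lintegral_prod_right' (ν := volume)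
      (f := fun p : (Fin n → ℝ) × (Fin n → ℝ) => ENNReal.ofReal (ρr p.2) * f (a • p.1 + s • p.2))
      ((hρm.comp measurable_snd).mul hker)
  have inner_eq : ∀ x : Fin n → ℝ, (∫⁻ y, f (a • x + s • y) ∂(stdGaussian n))
      = ∫⁻ y, ENNReal.ofReal (ρr y) * f (a • x + s • y) ∂volume := by
    intro x
    have hg : Measurable fun y : Fin n → ℝ => f (a • x + s • y) :=
      hf.comp (measurable_const.add (measurable_const_smul s))
    rw [stdGaussian, lintegral_withDensity_eq_lintegral_mul _ hρm hg]
    rfl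
  have step1 : ∫⁻ x, (∫⁻ y, f (a • x + s • y) ∂(stdGaussian n)) ∂(stdGaussian n)
      = ∫⁻ x, ENNReal.ofReal (ρr x) *
          ∫⁻ y, ENNReal.ofReal (ρr y) * f (a • x + s • y) ∂volume ∂volume := by
    rw [lintegral_congr inner_eq, stdGaussian,
      lintegral_withDensity_eq_lintegral_mul _ hρm hinmeas]
    rfl
  rw [step1]
  -- mass of the gaussian
  have mass : ∫⁻ x : Fin n → ℝ, ENNReal.ofReal (ρr x) ∂volume = 1 := by
    have h := (stdGaussian_prob n).measure_univ
    rwa [stdGaussian, withDensity_apply _ MeasurableSet.univ, Measure.restrict_univ] at h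
  set κ : ENNReal := ENNReal.ofReal |((s:ℝ) ^ n)⁻¹| with hκdef
  -- Step 2: inner change of variables
  have step2 : ∀ x : Fin n → ℝ, (∫⁻ y, ENNReal.ofReal (ρr y) * f (a • x + s • y) ∂volume)
      = κ * ∫⁻ w, ENNReal.ofReal (ρr (s⁻¹ • (w - a • x))) * f w ∂volume := by
    intro x
    have hFm : Measurable fun w : Fin n → ℝ =>
        ENNReal.ofReal (ρr (s⁻¹ • w)) * f (a • x + w) :=
      (((cont_density n).comp (continuous_const_smul s⁻¹)).measurable.ennreal_ofReal).mul
        (hf.comp (measurable_const.add measurable_id))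
    have h1 : ∀ y : Fin n → ℝ, ENNReal.ofReal (ρr y) * f (a • x + s • y)
        = (fun w => ENNReal.ofReal (ρr (s⁻¹ • w)) * f (a • x + w)) (s • y) := by
      intro y
      simp only [smul_smul, inv_mul_cancel₀ hs.ne', one_smul]
    have h2 : ∀ w : Fin n → ℝ, ENNReal.ofReal (ρr (s⁻¹ • w)) * f (a • x + w)
        = (fun z => ENNReal.ofReal (ρr (s⁻¹ • (z - a • x))) * f z) (w + a • x) := by
      intro w
      simp only [add_sub_cancel_right]
      rw [add_comm]
    rw [lintegral_congr h1, lintegral_comp_smul_pi n hs.ne' hFm, lintegral_congr h2,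
      lintegral_add_right_eq_self (fun z => ENNReal.ofReal (ρr (s⁻¹ • (z - a • x))) * f z)
        (a • x)]
  -- Step 3: rearrange and pull out κ
  have e3 : ∀ x : Fin n → ℝ, ENNReal.ofReal (ρr x) *
        ∫⁻ y, ENNReal.ofReal (ρr y) * f (a • x + s • y) ∂volume
      = κ * ∫⁻ w, ENNReal.ofReal (ρr x) *
          (ENNReal.ofReal (ρr (s⁻¹ • (w - a • x))) * f w) ∂volume := by
    intro x
    rw [step2 x, lintegral_const_mul' (ENNReal.ofReal (ρr x))
      (fun w => ENNReal.ofReal (ρr (s⁻¹ • (w - a • x))) * f w) ENNReal.ofReal_ne_top,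
      mul_left_comm]
  rw [lintegral_congr e3, lintegral_const_mul' κ _ ENNReal.ofReal_ne_top]
  -- Step 4: Tonelli swap
  have hswap : ∫⁻ x, ∫⁻ w, ENNReal.ofReal (ρr x) *
        (ENNReal.ofReal (ρr (s⁻¹ • (w - a • x))) * f w) ∂volume ∂volume
      = ∫⁻ w, ∫⁻ x, ENNReal.ofReal (ρr x) *
        (ENNReal.ofReal (ρr (s⁻¹ • (w - a • x))) * f w) ∂volume ∂volume := by
    apply lintegral_lintegral_swap
    exact ((hρm.comp measurable_fst).mul
      ((hρm.comp (((measurable_snd.sub (measurable_fst.const_smul a))).const_smul s⁻¹)).mul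
        (hf.comp measurable_snd))).aemeasurable
  rw [hswap]
  -- Step 5: evaluate inner integral in x
  have key : ∀ w : Fin n → ℝ, ∫⁻ x, ENNReal.ofReal (ρr x) *
        (ENNReal.ofReal (ρr (s⁻¹ • (w - a • x))) * f w) ∂volume
      = ENNReal.ofReal (s ^ n) * (ENNReal.ofReal (ρr w) * f w) := by
    intro w
    have e4 : ∀ x : Fin n → ℝ, ENNReal.ofReal (ρr x) *
          (ENNReal.ofReal (ρr (s⁻¹ • (w - a • x))) * f w)
        = (ENNReal.ofReal (ρr x) * ENNReal.ofReal (ρr (s⁻¹ • (w - a • x)))) * f w := by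
      intro x; rw [mul_assoc]
    have hprodm : Measurable fun x : Fin n → ℝ =>
        ENNReal.ofReal (ρr x) * ENNReal.ofReal (ρr (s⁻¹ • (w - a • x))) :=
      hρm.mul (hρm.comp ((measurable_const.sub (measurable_id.const_smul a)).const_smul s⁻¹))
    rw [lintegral_congr e4, lintegral_mul_const _ hprodm]
    have e5 : ∀ x : Fin n → ℝ,
        ENNReal.ofReal (ρr x) * ENNReal.ofReal (ρr (s⁻¹ • (w - a • x)))
          = ENNReal.ofReal (ρr w) * ENNReal.ofReal (ρr (s⁻¹ • (x - a • w))) := by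
      intro x
      rw [← ENNReal.ofReal_mul (rhor_nonneg n x), dens_id n hs.ne' has x w,
        ENNReal.ofReal_mul (rhor_nonneg n w)]
    rw [lintegral_congr e5, lintegral_const_mul' _ _ ENNReal.ofReal_ne_top]
    have e6 : ∀ x : Fin n → ℝ, ENNReal.ofReal (ρr (s⁻¹ • (x - a • w)))
        = (fun z => ENNReal.ofReal (ρr (s⁻¹ • z))) (x + -(a • w)) := by
      intro x; rw [← sub_eq_add_neg]
    have hKm : Measurable fun z : Fin n → ℝ => ENNReal.ofReal (ρr (s⁻¹ • z)) :=
      ((cont_density n).comp (continuous_const_smul s⁻¹)).measurable.ennreal_ofReal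
    rw [lintegral_congr e6,
      lintegral_add_right_eq_self (fun z => ENNReal.ofReal (ρr (s⁻¹ • z))) (-(a • w)),
      lintegral_comp_smul_pi n (inv_ne_zero hs.ne') hρm, mass, mul_one]
    have : |((s⁻¹ : ℝ) ^ n)⁻¹| = s ^ n := by
      rw [← inv_pow, inv_inv, abs_of_nonneg (by positivity)]
    rw [this]
    ring
  rw [lintegral_congr key]
  -- Step 6: pull out the constant and recombine
  rw [lintegral_const_mul' (ENNReal.ofReal (s ^ n)) _ ENNReal.ofReal_ne_top, ← mul_assoc,
    hκdef, ← ENNReal.ofReal_mul (abs_nonneg _), abs_of_nonneg (by positivity : (0:ℝ) ≤ ((s:ℝ)^n)⁻¹),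
    inv_mul_cancel₀ (by positivity : ((s:ℝ)^n) ≠ 0), ENNReal.ofReal_one, one_mul]
  rw [stdGaussian, lintegral_withDensity_eq_lintegral_mul _ hρm hf]
  rfl

end Invariance

section Deriv
variable {n : ℕ}

lemma clm_apply_eq_sum (L : (Fin n → ℝ) →L[ℝ] ℝ) (v : Fin n → ℝ) :
    L v = ∑ i, v i * L (Pi.single i 1) := by
  conv_lhs => rw [← Finset.univ_sum_single v]
  rw [map_sum]
  refine Finset.sum_congr rfl fun i _ => ?_
  have h : Pi.single i (v i) = v i • (Pi.single i 1 : Fin n → ℝ) := by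
    ext j
    rcases eq_or_ne j i with rfl | hj
    · simp
    · simp [Pi.single_apply, hj]
  rw [h, _root_.map_smul, smul_eq_mul]

lemma fderiv_norm_bound {u : (Fin n → ℝ) → ℝ} {C : ℝ}
    (hgrad : ∀ x, ∑ i, grad u x i ^ 2 ≤ C) (z : Fin n → ℝ) :
    ‖fderiv ℝ u z‖ ≤ n * Real.sqrt (max C 0) := by
  refine ContinuousLinearMap.opNorm_le_bound _ (by positivity) fun v => ?_
  rw [clm_apply_eq_sum]
  calc ‖∑ i, v i * fderiv ℝ u z (Pi.single i 1)‖
      ≤ ∑ i, ‖v i * fderiv ℝ u z (Pi.single i 1)‖ := norm_sum_le _ _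
    _ ≤ ∑ i : Fin n, Real.sqrt (max C 0) * ‖v‖ := by
        refine Finset.sum_le_sum fun i _ => ?_
        rw [norm_mul]
        have h1 : ‖v i‖ ≤ ‖v‖ := norm_le_pi_norm v i
        have h2 : ‖fderiv ℝ u z (Pi.single i 1)‖ ≤ Real.sqrt (max C 0) := by
          have h3 : (grad u z i) ^ 2 ≤ max C 0 := by
            refine le_trans ?_ (le_max_left _ _)
            refine le_trans ?_ (hgrad z)
            exact Finset.single_le_sum (fun j _ => sq_nonneg (grad u z j)) (Finset.mem_univ i)
          have h4 : |grad u z i| ≤ Real.sqrt (max C 0) := by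
            rw [← Real.sqrt_sq_eq_abs]
            exact Real.sqrt_le_sqrt h3
          simpa [grad, Real.norm_eq_abs] using h4
        calc ‖v i‖ * ‖fderiv ℝ u z (Pi.single i 1)‖
            ≤ ‖v‖ * Real.sqrt (max C 0) := by
              apply mul_le_mul h1 h2 (norm_nonneg _) (norm_nonneg _)
          _ = Real.sqrt (max C 0) * ‖v‖ := mul_comm _ _
    _ = n * Real.sqrt (max C 0) * ‖v‖ := by
        rw [Finset.sum_const, Finset.card_univ, Fintype.card_fin, nsmul_eq_mul]; ring

lemma integrable_of_bdd_cont {E : Type*} [NormedAddCommGroup E] {α : Type*} [MeasurableSpace α]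
    [TopologicalSpace α] [OpensMeasurableSpace α] [SecondCountableTopology α]
    (μ : Measure α) [IsFiniteMeasure μ]
    {f : α → E} (hf : Continuous f) {C : ℝ} (hC : ∀ x, ‖f x‖ ≤ C) : Integrable f μ :=
  (integrable_const C).mono' hf.aestronglyMeasurable (Eventually.of_forall hC)

lemma grad_ou_eq (t : ℝ) (ht : 0 < t) (u : (Fin n → ℝ) → ℝ) (hu : ContDiff ℝ 1 u)
    (hupos : ∀ x, 0 < u x) {C₁ : ℝ} (hubdd : ∀ x, u x ≤ C₁)
    {C : ℝ} (hgrad : ∀ x, ∑ i, grad u x i ^ 2 ≤ C) (x : Fin n → ℝ) (i : Fin n) :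
    grad (ouSemigroup n t u) x i
      = Real.exp (-t) * ∫ y, grad u (Real.exp (-t) • x + Real.sqrt (1 - Real.exp (-2 * t)) • y) i
          ∂(stdGaussian n) := by
  set a := Real.exp (-t) with ha_def
  set s := Real.sqrt (1 - Real.exp (-2 * t)) with hs_def
  set β := stdGaussian n
  have hgradcont : Continuous (fderiv ℝ u) := hu.continuous_fderiv one_ne_zero
  have hzcont : ∀ x : Fin n → ℝ, Continuous fun y : Fin n → ℝ => a • x + s • y := by
    intro x; fun_prop
  have hF'cont : Continuous fun y : Fin n → ℝ => a • fderiv ℝ u (a • x + s • y) :=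
    ((hgradcont.comp (hzcont x)).const_smul a)
  have hF'bd : ∀ x' y : Fin n → ℝ,
      ‖a • fderiv ℝ u (a • x' + s • y)‖ ≤ a * (n * Real.sqrt (max C 0)) := by
    intro x' y
    rw [norm_smul, Real.norm_eq_abs, abs_of_pos (Real.exp_pos _)]
    exact mul_le_mul_of_nonneg_left (fderiv_norm_bound hgrad _) (Real.exp_pos _).le
  have hF'int : Integrable (fun y => a • fderiv ℝ u (a • x + s • y)) β :=
    integrable_of_bdd_cont β hF'cont (hF'bd x)
  have hderiv : HasFDerivAt (fun x => ouSemigroup n t u x)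
      (∫ y, a • fderiv ℝ u (a • x + s • y) ∂β) x := by
    have key := hasFDerivAt_integral_of_dominated_of_fderiv_le (μ := β)
      (F := fun x y => u (a • x + s • y))
      (F' := fun x y => a • fderiv ℝ u (a • x + s • y))
      (x₀ := x) (bound := fun _ => a * (n * Real.sqrt (max C 0)))
      (s := Metric.ball x 1) (Metric.ball_mem_nhds x one_pos)
      (Eventually.of_forall fun x' => ((hu.continuous).comp (hzcont x')).aestronglyMeasurable)
      (integrable_of_bdd_cont β ((hu.continuous).comp (hzcont x))
        (C := C₁) (fun y => by
          rw [Real.norm_eq_abs, abs_of_pos (hupos _)]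
          exact hubdd _))
      hF'cont.aestronglyMeasurable
      (Eventually.of_forall fun y => fun x' _ => by simpa using hF'bd x' y)
      (integrable_const _)
      (Eventually.of_forall fun y => fun x' _ => ?_)
    · exact key
    · -- differentiability in x'
      have h1 : HasFDerivAt (fun x'' : Fin n → ℝ => a • x'' + s • y)
          (a • ContinuousLinearMap.id ℝ (Fin n → ℝ)) x' :=
        ((hasFDerivAt_id x').const_smul a).add_const (s • y)
      have h2 := (hu.differentiable one_ne_zero (a • x' + s • y)).hasFDerivAt
      have h3 := h2.comp x' h1
      have h4 : (fderiv ℝ u (a • x' + s • y)).comp (a • ContinuousLinearMap.id ℝ (Fin n → ℝ))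
          = a • fderiv ℝ u (a • x' + s • y) := by
        ext v
        simp
      rwa [h4] at h3
  unfold grad
  rw [hderiv.fderiv, ContinuousLinearMap.integral_apply hF'int]
  simp_rw [ContinuousLinearMap.smul_apply]
  rw [integral_smul]
  simp [smul_eq_mul]

end Deriv

section Pointwise
variable {n : ℕ}

lemma grad_abs_le {u : (Fin n → ℝ) → ℝ} {C : ℝ}
    (hgrad : ∀ x, ∑ i, grad u x i ^ 2 ≤ C) (z : Fin n → ℝ) (i : Fin n) :
    |grad u z i| ≤ Real.sqrt (max C 0) := by
  rw [← Real.sqrt_sq_eq_abs]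
  refine Real.sqrt_le_sqrt ?_
  refine le_trans ?_ (le_max_left _ _)
  refine le_trans ?_ (hgrad z)
  exact Finset.single_le_sum (fun j _ => sq_nonneg (grad u z j)) (Finset.mem_univ i)

lemma grad_coord_continuous {u : (Fin n → ℝ) → ℝ} (hu : ContDiff ℝ 1 u) (i : Fin n) :
    Continuous fun z => grad u z i :=
  (hu.continuous_fderiv one_ne_zero).clm_apply continuous_const

lemma pointwise_cs (t : ℝ) (ht : 0 < t) (u : (Fin n → ℝ) → ℝ) (hu : ContDiff ℝ 1 u)
    (hupos : ∀ x, 0 < u x) {C₁ : ℝ} (hubdd : ∀ x, u x ≤ C₁)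
    {C : ℝ} (hgrad : ∀ x, ∑ i, grad u x i ^ 2 ≤ C) (x : Fin n → ℝ) :
    ENNReal.ofReal ((∑ i, grad (ouSemigroup n t u) x i ^ 2) / ouSemigroup n t u x)
      ≤ ENNReal.ofReal (Real.exp (-t) ^ 2) *
        ∫⁻ y, ENNReal.ofReal
          ((∑ i, grad u (Real.exp (-t) • x + Real.sqrt (1 - Real.exp (-2 * t)) • y) i ^ 2)
            / u (Real.exp (-t) • x + Real.sqrt (1 - Real.exp (-2 * t)) • y))
          ∂(stdGaussian n) := by
  set a := Real.exp (-t) with ha_def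
  set s := Real.sqrt (1 - Real.exp (-2 * t)) with hs_def
  set β := stdGaussian n with hβ_def
  set g : (Fin n → ℝ) → ℝ := fun y => u (a • x + s • y) with hg_def
  set v : Fin n → (Fin n → ℝ) → ℝ := fun i y => grad u (a • x + s • y) i with hv_def
  have hzcont : Continuous fun y : Fin n → ℝ => a • x + s • y := by fun_prop
  have hgcont : Continuous g := hu.continuous.comp hzcont
  have hvcont : ∀ i, Continuous (v i) := fun i => (grad_coord_continuous hu i).comp hzcont
  have hgpos : ∀ y, 0 < g y := fun y => hupos _
  have hgint : Integrable g β := integrable_of_bdd_cont β hgcont (C := C₁)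
    (fun y => by rw [Real.norm_eq_abs, abs_of_pos (hgpos y)]; exact hubdd _)
  have hvint : ∀ i, Integrable (v i) β := fun i =>
    integrable_of_bdd_cont β (hvcont i) (C := Real.sqrt (max C 0))
      (fun y => by rw [Real.norm_eq_abs]; exact grad_abs_le hgrad _ i)
  have hQ : ouSemigroup n t u x = ∫ y, g y ∂β := rfl
  have hQpos : 0 < ∫ y, g y ∂β := by
    rw [integral_pos_iff_support_of_nonneg_ae
      (Eventually.of_forall fun y => (hgpos y).le) hgint]
    have : Function.support g = Set.univ :=
      Set.eq_univ_iff_forall.mpr (fun y => (hgpos y).ne')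
    rw [this]
    simp
  set Jl : ENNReal := ∫⁻ y, ENNReal.ofReal (g y) ∂β with hJl_def
  have hJ : ENNReal.ofReal (∫ y, g y ∂β) = Jl :=
    ofReal_integral_eq_lintegral_ofReal hgint (Eventually.of_forall fun y => (hgpos y).le)
  set K : Fin n → ENNReal := fun i => ∫⁻ y, ENNReal.ofReal (v i y ^ 2 / g y) ∂β with hK_def
  set I : Fin n → ℝ := fun i => ∫ y, v i y ∂β with hI_def
  -- Cauchy-Schwarz per coordinate
  have hCS : ∀ i, ENNReal.ofReal (I i ^ 2) ≤ K i * Jl := by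
    intro i
    have habs : |I i| ≤ ∫ y, |v i y| ∂β := by
      simpa [Real.norm_eq_abs] using norm_integral_le_integral_norm (μ := β) (v i)
    have h1 : ENNReal.ofReal (I i ^ 2) = ENNReal.ofReal |I i| ^ 2 := by
      rw [← ENNReal.ofReal_pow (abs_nonneg _), sq_abs]
    have h2 : ENNReal.ofReal |I i| ≤ ∫⁻ y, ENNReal.ofReal |v i y| ∂β := by
      refine le_trans (ENNReal.ofReal_le_ofReal habs) ?_
      rw [ofReal_integral_eq_lintegral_ofReal ((hvint i).abs)
        (Eventually.of_forall fun y => abs_nonneg _)]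
    -- Hölder with p = q = 2
    have hpq : Real.HolderConjugate 2 2 := Real.HolderConjugate.two_two
    have hfm : AEMeasurable (fun y => ENNReal.ofReal (|v i y| / Real.sqrt (g y))) β :=
      (((hvcont i).abs.div (hgcont.sqrt)
        (fun y => (Real.sqrt_pos.mpr (hgpos y)).ne')).measurable.ennreal_ofReal).aemeasurable
    have hgm : AEMeasurable (fun y => ENNReal.ofReal (Real.sqrt (g y))) β :=
      ((hgcont.sqrt).measurable.ennreal_ofReal).aemeasurable
    have hsplit : ∀ y, ENNReal.ofReal |v i y|
        = ENNReal.ofReal (|v i y| / Real.sqrt (g y)) * ENNReal.ofReal (Real.sqrt (g y)) := by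
      intro y
      rw [← ENNReal.ofReal_mul (by positivity),
        div_mul_cancel₀ _ (Real.sqrt_pos.mpr (hgpos y)).ne']
    have hholder := ENNReal.lintegral_mul_le_Lp_mul_Lq β hpq hfm hgm
    have hf2 : ∀ y : Fin n → ℝ, ENNReal.ofReal (|v i y| / Real.sqrt (g y)) ^ (2:ℝ)
        = ENNReal.ofReal (v i y ^ 2 / g y) := by
      intro y
      rw [ENNReal.ofReal_rpow_of_nonneg (by positivity) (by norm_num)]
      congr 1
      rw [show ((2:ℝ)) = ((2:ℕ):ℝ) by norm_num, Real.rpow_natCast, div_pow, sq_abs,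
        Real.sq_sqrt (hgpos y).le]
    have hg2 : ∀ y : Fin n → ℝ, ENNReal.ofReal (Real.sqrt (g y)) ^ (2:ℝ)
        = ENNReal.ofReal (g y) := by
      intro y
      rw [ENNReal.ofReal_rpow_of_nonneg (Real.sqrt_nonneg _) (by norm_num)]
      congr 1
      rw [show ((2:ℝ)) = ((2:ℕ):ℝ) by norm_num, Real.rpow_natCast, Real.sq_sqrt (hgpos y).le]
    rw [h1]
    calc ENNReal.ofReal |I i| ^ 2
        ≤ (∫⁻ y, ENNReal.ofReal |v i y| ∂β) ^ 2 := pow_le_pow_left' h2 2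
      _ = (∫⁻ y, ENNReal.ofReal (|v i y| / Real.sqrt (g y))
            * ENNReal.ofReal (Real.sqrt (g y)) ∂β) ^ 2 := by
          congr 1
          exact lintegral_congr hsplit
      _ ≤ ((∫⁻ y, ENNReal.ofReal (|v i y| / Real.sqrt (g y)) ^ (2:ℝ) ∂β) ^ (1/(2:ℝ))
            * (∫⁻ y, ENNReal.ofReal (Real.sqrt (g y)) ^ (2:ℝ) ∂β) ^ (1/(2:ℝ))) ^ 2 := by
          exact pow_le_pow_left' hholder 2
      _ = K i * Jl := by
          rw [lintegral_congr hf2, lintegral_congr hg2]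
          rw [mul_pow, ← ENNReal.rpow_natCast (_ ^ (1/(2:ℝ))) 2,
            ← ENNReal.rpow_natCast (Jl ^ (1/(2:ℝ))) 2,
            ← ENNReal.rpow_mul, ← ENNReal.rpow_mul]
          norm_num
          rfl
  -- assemble
  have hgradQ : ∀ i, grad (ouSemigroup n t u) x i = a * I i := fun i =>
    grad_ou_eq t ht u hu hupos hubdd hgrad x i
  have hsum : (∑ i, grad (ouSemigroup n t u) x i ^ 2) = a ^ 2 * ∑ i, I i ^ 2 := by
    rw [Finset.mul_sum]
    refine Finset.sum_congr rfl fun i _ => ?_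
    rw [hgradQ i]; ring
  rw [hsum, hQ, mul_div_assoc, ENNReal.ofReal_mul (sq_nonneg a)]
  refine mul_le_mul_right ?_ _
  rw [ENNReal.ofReal_div_of_pos hQpos, hJ]
  rw [ENNReal.div_le_iff (by rw [← hJ]; simpa using hQpos) (by rw [← hJ]; exact ENNReal.ofReal_ne_top)]
  have hKsum : (∫⁻ y, ENNReal.ofReal ((∑ i, v i y ^ 2) / g y) ∂β) = ∑ i, K i := by
    have e1 : ∀ y, ENNReal.ofReal ((∑ i, v i y ^ 2) / g y)
        = ∑ i, ENNReal.ofReal (v i y ^ 2 / g y) := by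
      intro y
      rw [Finset.sum_div, ENNReal.ofReal_sum_of_nonneg (fun i _ => div_nonneg (sq_nonneg _) (hgpos y).le)]
    rw [lintegral_congr e1]
    exact lintegral_finset_sum _ fun i _ =>
      (((hvcont i).pow 2).div hgcont (fun y => (hgpos y).ne')).measurable.ennreal_ofReal
  rw [hKsum]
  calc ENNReal.ofReal (∑ i, I i ^ 2) = ∑ i, ENNReal.ofReal (I i ^ 2) :=
        ENNReal.ofReal_sum_of_nonneg (fun i _ => sq_nonneg _)
    _ ≤ ∑ i, K i * Jl := Finset.sum_le_sum fun i _ => hCS i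
    _ = (∑ i, K i) * Jl := (Finset.sum_mul ..).symm

end Pointwise

/-- Contraction of Fisher information under the
Ornstein–Uhlenbeck semigroup:
`∫ |∇(Q_t u)|²/(Q_t u) dβ ≤ e^{−2t} ∫ |∇u|²/u dβ`, as an inequality in `[0, ∞]`. -/
theorem fisher_information_contraction (n : ℕ) (t : ℝ) (ht : 0 < t)
    (u : (Fin n → ℝ) → ℝ) (hu : ContDiff ℝ 1 u) (hupos : ∀ x, 0 < u x)
    (hubdd : ∃ C : ℝ, ∀ x, u x ≤ C)
    (hgradbdd : ∃ C : ℝ, ∀ x, ∑ i, grad u x i ^ 2 ≤ C) :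
    ∫⁻ x, ENNReal.ofReal
        ((∑ i, grad (ouSemigroup n t u) x i ^ 2) / ouSemigroup n t u x) ∂(stdGaussian n)
      ≤ ENNReal.ofReal (Real.exp (-2 * t)) *
        ∫⁻ x, ENNReal.ofReal ((∑ i, grad u x i ^ 2) / u x) ∂(stdGaussian n) := by
  obtain ⟨C₁, hubdd⟩ := hubdd
  obtain ⟨C, hgrad⟩ := hgradbdd
  set a := Real.exp (-t) with ha_def
  set s := Real.sqrt (1 - Real.exp (-2 * t)) with hs_def
  have ha : 0 < a := Real.exp_pos _
  have he2t : Real.exp (-2 * t) < 1 := by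
    rw [← Real.exp_zero]
    exact Real.exp_lt_exp.mpr (by linarith)
  have hs : 0 < s := Real.sqrt_pos.mpr (by linarith)
  have ha2 : a ^ 2 = Real.exp (-2 * t) := by
    rw [sq, ← Real.exp_add]
    congr 1
    ring
  have has : a ^ 2 + s ^ 2 = 1 := by
    rw [ha2, Real.sq_sqrt (by linarith)]
    ring
  have hφm : Measurable fun z : Fin n → ℝ =>
      ENNReal.ofReal ((∑ i, grad u z i ^ 2) / u z) := by
    have hc : Continuous fun z : Fin n → ℝ => (∑ i, grad u z i ^ 2) / u z :=
      (continuous_finset_sum _ fun i _ => (grad_coord_continuous hu i).pow 2).div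
        hu.continuous (fun z => (hupos z).ne')
    exact hc.measurable.ennreal_ofReal
  calc ∫⁻ x, ENNReal.ofReal
        ((∑ i, grad (ouSemigroup n t u) x i ^ 2) / ouSemigroup n t u x) ∂(stdGaussian n)
      ≤ ∫⁻ x, ENNReal.ofReal (a ^ 2) *
          ∫⁻ y, ENNReal.ofReal ((∑ i, grad u (a • x + s • y) i ^ 2) / u (a • x + s • y))
            ∂(stdGaussian n) ∂(stdGaussian n) :=
        lintegral_mono fun x => pointwise_cs t ht u hu hupos hubdd hgrad x
    _ = ENNReal.ofReal (a ^ 2) *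
          ∫⁻ x, ∫⁻ y, ENNReal.ofReal ((∑ i, grad u (a • x + s • y) i ^ 2) / u (a • x + s • y))
            ∂(stdGaussian n) ∂(stdGaussian n) :=
        lintegral_const_mul' _ _ ENNReal.ofReal_ne_top
    _ = ENNReal.ofReal (Real.exp (-2 * t)) *
          ∫⁻ x, ENNReal.ofReal ((∑ i, grad u x i ^ 2) / u x) ∂(stdGaussian n) := by
        rw [ou_invariance n ha hs has hφm, ha2]
end

section
/- Let β_n and β_m denote the standard Gaussian measures on ℝ^n and ℝ^m, and let F : ℝ^n × ℝ^m → (0,∞) be a bounded C¹ function with bounded gradient. Define the marginal F̄(x) = ∫ F(x,y) dβ_m(y). Then ∫ |∇F̄(x)|² / F̄(x) dβ_n(x) ≤ ∫∫ |∇F(x,y)|² / F(x,y) dβ_n(x) dβ_m(y), where ∇F denotes the full gradient of F on ℝ^n × ℝ^m. (This is the Fisher-information bound for conditional expectations used in the proof of Lemma 4.5.) -/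
open MeasureTheory Real Filter Topology

lemma stdGaussian_density_integrable (k : ℕ) :
    Integrable (fun x : Fin k → ℝ =>
      (2 * π) ^ (-(k : ℝ) / 2) * Real.exp (-(∑ i, x i ^ 2) / 2)) := by
  have h1 : Integrable (fun t : ℝ => Real.exp (-(1/2 : ℝ) * t ^ 2)) :=
    integrable_exp_neg_mul_sq (by norm_num)
  have h2 : Integrable (fun x : Fin k → ℝ =>
      ∏ i, Real.exp (-(1/2 : ℝ) * (x i) ^ 2)) :=
    Integrable.fintype_prod (f := fun _ t => Real.exp (-(1/2 : ℝ) * t ^ 2)) fun _ => h1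
  have := h2.const_mul ((2 * π) ^ (-(k : ℝ) / 2))
  convert this using 2 with x
  rw [← Real.exp_sum]
  congr 1
  rw [neg_div, Finset.sum_div]
  congr 1
  rw [← Finset.sum_neg_distrib]
  exact Finset.sum_congr rfl fun i _ => by ring

instance stdGaussian_finite (k : ℕ) : IsFiniteMeasure (stdGaussian k) := by
  refine isFiniteMeasure_withDensity ?_
  exact (stdGaussian_density_integrable k).lintegral_lt_top.ne

lemma stdGaussian_univ_pos (k : ℕ) : 0 < stdGaussian k Set.univ := by
  rw [stdGaussian, withDensity_apply _ MeasurableSet.univ, Measure.restrict_univ]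
  rw [lintegral_pos_iff_support]
  · have hs : Function.support (fun x : Fin k → ℝ =>
        ENNReal.ofReal ((2 * π) ^ (-(k : ℝ) / 2) * Real.exp (-(∑ i, x i ^ 2) / 2))) = Set.univ := by
      ext x
      simp only [Function.mem_support, Set.mem_univ, iff_true]
      have : (0:ℝ) < (2 * π) ^ (-(k : ℝ) / 2) * Real.exp (-(∑ i, x i ^ 2) / 2) := by positivity
      simp [ENNReal.ofReal_pos.mpr this, ne_of_gt (ENNReal.ofReal_pos.mpr this)]
    rw [hs]
    rw [MeasureTheory.volume_pi, Measure.pi_univ]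
    rw [pos_iff_ne_zero, Finset.prod_ne_zero_iff]
    intro i _
    simp
  · exact (ENNReal.continuous_ofReal.comp (by continuity)).measurable

lemma key_CS {α : Type*} [MeasurableSpace α] (μ : Measure α) [IsFiniteMeasure μ]
    (g f : α → ℝ) (hg : Integrable g μ) (hf : Integrable f μ) (hfpos : ∀ y, 0 < f y)
    (hmeas : Measurable fun y => g y ^ 2 / f y) (hI : 0 < ∫ y, f y ∂μ) :
    ENNReal.ofReal ((∫ y, g y ∂μ) ^ 2 / ∫ y, f y ∂μ)
      ≤ ∫⁻ y, ENNReal.ofReal (g y ^ 2 / f y) ∂μ := by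
  by_cases htop : ∫⁻ y, ENNReal.ofReal (g y ^ 2 / f y) ∂μ = ⊤
  · rw [htop]; exact le_top
  set h := fun y => g y ^ 2 / f y with hh
  have hnn : ∀ y, 0 ≤ h y := fun y => div_nonneg (sq_nonneg _) (hfpos y).le
  have hint : Integrable h μ := by
    refine ⟨hmeas.aestronglyMeasurable, ?_⟩
    rw [hasFiniteIntegral_iff_ofReal (ae_of_all _ hnn)]
    exact lt_top_iff_ne_top.mpr htop
  rw [← ofReal_integral_eq_lintegral_ofReal hint (ae_of_all _ hnn)]
  apply ENNReal.ofReal_le_ofReal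
  set I := ∫ y, g y ∂μ with hI'
  set J := ∫ y, f y ∂μ with hJ'
  set t := I / J with ht
  have hpt : ∀ y, 2 * t * g y - t ^ 2 * f y ≤ h y := by
    intro y
    have h0 : (0:ℝ) < f y := hfpos y
    have h1 : h y - (2 * t * g y - t ^ 2 * f y) = (g y - t * f y) ^ 2 / f y := by
      rw [hh]
      field_simp
      ring
    nlinarith [div_nonneg (sq_nonneg (g y - t * f y)) h0.le]
  have hmono : ∫ y, (2 * t * g y - t ^ 2 * f y) ∂μ ≤ ∫ y, h y ∂μ :=
    integral_mono ((hg.const_mul _).sub (hf.const_mul _)) hint hpt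
  rw [integral_sub (hg.const_mul _) (hf.const_mul _), integral_const_mul,
    integral_const_mul] at hmono
  have hJ0 : J ≠ 0 := ne_of_gt hI
  have heq : 2 * t * I - t ^ 2 * J = I ^ 2 / J := by
    rw [ht]; field_simp; ring
  linarith


/-- Fisher-information bound for marginals (conditional
expectations): with `F̄(x) = ∫ F(x,y) dβ_m(y)`,
`∫ |∇F̄|²/F̄ dβ_n ≤ ∫∫ |∇F|²/F dβ_n dβ_m`. -/
theorem fisher_information_of_marginal (n m : ℕ)
    (F : (Fin n → ℝ) × (Fin m → ℝ) → ℝ)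
    (hF : ContDiff ℝ 1 F) (hFpos : ∀ p, 0 < F p)
    (hFbdd : ∃ C : ℝ, ∀ p, F p ≤ C)
    (hgradbdd : ∃ C : ℝ, ∀ p, ‖fderiv ℝ F p‖ ≤ C) :
    ∫⁻ x, ENNReal.ofReal
        ((∑ i, grad (fun x' => ∫ y, F (x', y) ∂(stdGaussian m)) x i ^ 2)
          / ∫ y, F (x, y) ∂(stdGaussian m)) ∂(stdGaussian n)
      ≤ ∫⁻ y, ∫⁻ x, ENNReal.ofReal
          (((∑ i, (fderiv ℝ F (x, y) (Pi.single i 1, 0)) ^ 2)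
              + ∑ j, (fderiv ℝ F (x, y) (0, Pi.single j 1)) ^ 2) / F (x, y))
          ∂(stdGaussian n) ∂(stdGaussian m) := by
  obtain ⟨C, hC⟩ := hFbdd
  obtain ⟨C', hC'⟩ := hgradbdd
  have hC'0 : 0 ≤ C' := le_trans (norm_nonneg _) (hC' (0, 0))
  have hFc : Continuous F := hF.continuous
  have hfdc : Continuous (fderiv ℝ F) := hF.continuous_fderiv one_ne_zero
  set βn := stdGaussian n
  set βm := stdGaussian m
  -- integrability of F (x, ·)
  have hFxint : ∀ x, Integrable (fun y => F (x, y)) βm := by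
    intro x
    refine (integrable_const C).mono'
      ((hFc.comp (Continuous.prodMk_right x)).aestronglyMeasurable) (ae_of_all _ fun y => ?_)
    rw [Real.norm_of_nonneg (hFpos _).le]
    exact hC _
  -- positivity of the marginal
  have hFbarpos : ∀ x, 0 < ∫ y, F (x, y) ∂βm := by
    intro x
    rw [integral_pos_iff_support_of_nonneg (fun y => (hFpos (x, y)).le) (hFxint x)]
    have : Function.support (fun y => F (x, y)) = Set.univ :=
      Set.eq_univ_of_forall fun y => (hFpos (x, y)).ne'
    rw [this]
    exact stdGaussian_univ_pos m
  -- the partial-in-x derivative CLM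
  set Ψ : ((Fin n → ℝ) × (Fin m → ℝ)) → (Fin n → ℝ) →L[ℝ] ℝ :=
    fun p => (fderiv ℝ F p).comp (ContinuousLinearMap.inl ℝ (Fin n → ℝ) (Fin m → ℝ)) with hΨ
  have hΨc : Continuous Ψ := hfdc.clm_comp continuous_const
  have hΨnorm : ∀ p, ‖Ψ p‖ ≤ C' := by
    intro p
    refine ContinuousLinearMap.opNorm_le_bound _ hC'0 fun v => ?_
    have h1 : ‖(v, (0 : Fin m → ℝ))‖ = ‖v‖ := by
      rw [Prod.norm_def, norm_zero]
      exact max_eq_left (norm_nonneg v)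
    calc ‖(fderiv ℝ F p) (v, 0)‖ ≤ ‖fderiv ℝ F p‖ * ‖(v, (0 : Fin m → ℝ))‖ :=
          (fderiv ℝ F p).le_opNorm _
      _ ≤ C' * ‖v‖ := by rw [h1]; exact mul_le_mul_of_nonneg_right (hC' p) (norm_nonneg v)
  have hΨint : ∀ x, Integrable (fun y => Ψ (x, y)) βm := fun x =>
    (integrable_const C').mono' ((hΨc.comp (Continuous.prodMk_right x)).aestronglyMeasurable)
      (ae_of_all _ fun y => hΨnorm (x, y))
  have hD : ∀ x, HasFDerivAt (fun x' => ∫ y, F (x', y) ∂βm) (∫ y, Ψ (x, y) ∂βm) x := by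
    intro x
    apply hasFDerivAt_integral_of_dominated_of_fderiv_le (F' := fun x' y => Ψ (x', y))
      (bound := fun _ => C') (Metric.ball_mem_nhds x one_pos)
    · filter_upwards with x' using
        (hFc.comp (Continuous.prodMk_right x')).aestronglyMeasurable
    · exact hFxint x
    · exact (hΨc.comp (Continuous.prodMk_right x)).aestronglyMeasurable
    · exact ae_of_all _ fun y x' _ => hΨnorm (x', y)
    · exact integrable_const C'
    · exact ae_of_all _ fun y x' _ =>
        ((hF.differentiable one_ne_zero (x', y)).hasFDerivAt).comp x'
          (hasFDerivAt_prodMk_left x' y)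
  have hgrad : ∀ x i, grad (fun x' => ∫ y, F (x', y) ∂βm) x i
      = ∫ y, fderiv ℝ F (x, y) (Pi.single i 1, 0) ∂βm := by
    intro x i
    rw [grad, (hD x).fderiv, ContinuousLinearMap.integral_apply (hΨint x)]
    congr 1 with y
  -- continuity facts
  have hgicont : ∀ i : Fin n, Continuous fun p : (Fin n → ℝ) × (Fin m → ℝ) =>
      fderiv ℝ F p (Pi.single i 1, 0) := fun i => hfdc.clm_apply continuous_const
  have hhjcont : ∀ j : Fin m, Continuous fun p : (Fin n → ℝ) × (Fin m → ℝ) =>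
      fderiv ℝ F p (0, Pi.single j 1) := fun j => hfdc.clm_apply continuous_const
  have hgibnd : ∀ (i : Fin n) p, ‖fderiv ℝ F p (Pi.single i 1, 0)‖
      ≤ C' * ‖(Pi.single i 1 : Fin n → ℝ)‖ := by
    intro i p
    have := (Ψ p).le_opNorm (Pi.single i 1)
    have h2 : Ψ p (Pi.single i 1) = fderiv ℝ F p (Pi.single i 1, 0) := rfl
    calc ‖fderiv ℝ F p (Pi.single i 1, 0)‖ ≤ ‖Ψ p‖ * ‖(Pi.single i 1 : Fin n → ℝ)‖ := by
          rw [← h2]; exact (Ψ p).le_opNorm _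
      _ ≤ C' * ‖(Pi.single i 1 : Fin n → ℝ)‖ :=
          mul_le_mul_of_nonneg_right (hΨnorm p) (norm_nonneg _)
  have hgiint : ∀ x (i : Fin n),
      Integrable (fun y => fderiv ℝ F (x, y) (Pi.single i 1, 0)) βm := fun x i =>
    (integrable_const _).mono' (((hgicont i).comp (Continuous.prodMk_right x)).aestronglyMeasurable)
      (ae_of_all _ fun y => hgibnd i (x, y))
  -- pointwise bound
  have hpoint : ∀ x, ENNReal.ofReal
      ((∑ i, grad (fun x' => ∫ y, F (x', y) ∂βm) x i ^ 2) / ∫ y, F (x, y) ∂βm)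
      ≤ ∫⁻ y, ENNReal.ofReal
          ((∑ i, (fderiv ℝ F (x, y) (Pi.single i 1, 0)) ^ 2) / F (x, y)) ∂βm := by
    intro x
    rw [Finset.sum_div, ENNReal.ofReal_sum_of_nonneg
      (fun i _ => div_nonneg (sq_nonneg _) (hFbarpos x).le)]
    have step : ∀ i ∈ Finset.univ, ENNReal.ofReal
        (grad (fun x' => ∫ y, F (x', y) ∂βm) x i ^ 2 / ∫ y, F (x, y) ∂βm)
        ≤ ∫⁻ y, ENNReal.ofReal
            ((fderiv ℝ F (x, y) (Pi.single i 1, 0)) ^ 2 / F (x, y)) ∂βm := by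
      intro i _
      rw [hgrad]
      refine key_CS βm _ _ (hgiint x i) (hFxint x) (fun y => hFpos _) ?_ (hFbarpos x)
      exact ((((hgicont i).comp (Continuous.prodMk_right x)).pow 2).div
        (hFc.comp (Continuous.prodMk_right x)) (fun y => (hFpos (x, y)).ne')).measurable
    refine le_trans (Finset.sum_le_sum step) (le_of_eq ?_)
    rw [← lintegral_finset_sum]
    · refine lintegral_congr fun y => ?_
      rw [← ENNReal.ofReal_sum_of_nonneg
        (fun i _ => div_nonneg (sq_nonneg _) (hFpos (x, y)).le), Finset.sum_div]
    · intro i _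
      exact (ENNReal.continuous_ofReal.comp ((((hgicont i).comp
        (Continuous.prodMk_right x)).pow 2).div (hFc.comp (Continuous.prodMk_right x))
        (fun y => (hFpos (x, y)).ne'))).measurable
  -- final chain
  have hnumc : Continuous fun p : (Fin n → ℝ) × (Fin m → ℝ) =>
      ((∑ i, (fderiv ℝ F p (Pi.single i 1, 0)) ^ 2)
        + ∑ j, (fderiv ℝ F p (0, Pi.single j 1)) ^ 2) / F p := by
    refine Continuous.div ?_ hFc fun p => (hFpos p).ne'
    exact ((continuous_finset_sum _ fun i _ => (hgicont i).pow 2).add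
      (continuous_finset_sum _ fun j _ => (hhjcont j).pow 2))
  calc ∫⁻ x, ENNReal.ofReal
        ((∑ i, grad (fun x' => ∫ y, F (x', y) ∂βm) x i ^ 2) / ∫ y, F (x, y) ∂βm) ∂βn
      ≤ ∫⁻ x, ∫⁻ y, ENNReal.ofReal
          ((∑ i, (fderiv ℝ F (x, y) (Pi.single i 1, 0)) ^ 2) / F (x, y)) ∂βm ∂βn :=
        lintegral_mono hpoint
    _ ≤ ∫⁻ x, ∫⁻ y, ENNReal.ofReal
          (((∑ i, (fderiv ℝ F (x, y) (Pi.single i 1, 0)) ^ 2)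
              + ∑ j, (fderiv ℝ F (x, y) (0, Pi.single j 1)) ^ 2) / F (x, y)) ∂βm ∂βn := by
        refine lintegral_mono fun x => lintegral_mono fun y => ENNReal.ofReal_le_ofReal ?_
        exact (div_le_div_iff_of_pos_right (hFpos (x, y))).mpr
          (le_add_of_nonneg_right (Finset.sum_nonneg fun j _ => sq_nonneg _))
    _ = ∫⁻ y, ∫⁻ x, ENNReal.ofReal
          (((∑ i, (fderiv ℝ F (x, y) (Pi.single i 1, 0)) ^ 2)
              + ∑ j, (fderiv ℝ F (x, y) (0, Pi.single j 1)) ^ 2) / F (x, y)) ∂βn ∂βm := by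
        exact lintegral_lintegral_swap
          ((ENNReal.continuous_ofReal.comp hnumc).measurable.aemeasurable)
end

section
/- Let (Ω, 𝒜, ν) be a probability space, let (a_k) and (b_k) be sequences of nonnegative measurable functions on Ω, and let M > 0 be such that ∫ a_k² / (1 + b_k) dν ≤ M for every k. Assume the family (b_k) is uniformly integrable, i.e. for every ε > 0 there exists δ > 0 such that for every measurable set E with ν(E) < δ and every k, ∫_E b_k dν < ε. Then the family (a_k) is uniformly integrable: for every ε > 0 there exists δ > 0 such that ν(E) < δ implies ∫_E a_k dν < ε for all k. -/
open MeasureTheory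

/-- Transfer of uniform integrability: if
`∫ a_k²/(1 + b_k) dν ≤ M` for all `k` and the family `(b_k)` of nonnegative
functions is uniformly integrable, then the family `(a_k)` is uniformly
integrable. -/
theorem uniform_integrability_transfer {Ω : Type*} [MeasurableSpace Ω]
    (ν : Measure Ω) [IsProbabilityMeasure ν]
    (a b : ℕ → Ω → ℝ)
    (hameas : ∀ k, Measurable (a k)) (hbmeas : ∀ k, Measurable (b k))
    (hanonneg : ∀ k x, 0 ≤ a k x) (hbnonneg : ∀ k x, 0 ≤ b k x)
    (M : ℝ) (hM : 0 < M)
    (hbound : ∀ k, ∫⁻ x, ENNReal.ofReal (a k x ^ 2 / (1 + b k x)) ∂ν ≤ ENNReal.ofReal M)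
    (hui : ∀ ε : ℝ, 0 < ε → ∃ δ : ℝ, 0 < δ ∧ ∀ E : Set Ω, MeasurableSet E →
      ν E < ENNReal.ofReal δ → ∀ k,
        ∫⁻ x in E, ENNReal.ofReal (b k x) ∂ν < ENNReal.ofReal ε) :
    ∀ ε : ℝ, 0 < ε → ∃ δ : ℝ, 0 < δ ∧ ∀ E : Set Ω, MeasurableSet E →
      ν E < ENNReal.ofReal δ → ∀ k,
        ∫⁻ x in E, ENNReal.ofReal (a k x) ∂ν < ENNReal.ofReal ε := by
  intro ε hε
  set t : ℝ := 2 * M / ε with ht_def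
  have ht : 0 < t := by positivity
  obtain ⟨δ₀, hδ₀, hδ₀'⟩ := hui (ε / (2 * t)) (by positivity)
  refine ⟨min δ₀ (ε / (2 * t)), by positivity, ?_⟩
  intro E hE hνE k
  have hb := hδ₀' E hE
    (lt_of_lt_of_le hνE (ENNReal.ofReal_le_ofReal (min_le_left _ _))) k
  have hν : ν E < ENNReal.ofReal (ε / (2 * t)) :=
    lt_of_lt_of_le hνE (ENNReal.ofReal_le_ofReal (min_le_right _ _))
  have hpt : ∀ x, ENNReal.ofReal (a k x) ≤
      ENNReal.ofReal ((1 / (2 * t)) * (a k x ^ 2 / (1 + b k x))) +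
      ENNReal.ofReal (t / 2 * (1 + b k x)) := by
    intro x
    have h1 : (0:ℝ) < 1 + b k x := by linarith [hbnonneg k x]
    rw [← ENNReal.ofReal_add (by positivity)
      (by have := hanonneg k x; positivity)]
    apply ENNReal.ofReal_le_ofReal
    have hd : a k x ^ 2 / (1 + b k x) * (1 + b k x) = a k x ^ 2 :=
      div_mul_cancel₀ _ (ne_of_gt h1)
    set d := a k x ^ 2 / (1 + b k x) with hd_def
    have h2 : 2 * t * (1 + b k x) * a k x ≤
        2 * t * (1 + b k x) * (1 / (2 * t) * d + t / 2 * (1 + b k x)) := by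
      have expand : 2 * t * (1 + b k x) * (1 / (2 * t) * d + t / 2 * (1 + b k x))
          = (1 + b k x) * d + t ^ 2 * (1 + b k x) ^ 2 := by
        field_simp
      rw [expand, (show (1 + b k x) * d = a k x ^ 2 by rw [mul_comm]; exact hd)]
      nlinarith [sq_nonneg (a k x - t * (1 + b k x))]
    exact le_of_mul_le_mul_left h2 (by positivity)
  have hmeas1 : Measurable fun x =>
      ENNReal.ofReal ((1 / (2 * t)) * (a k x ^ 2 / (1 + b k x))) := by
    apply ENNReal.measurable_ofReal.comp
    exact (measurable_const.mul (((hameas k).pow_const 2).div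
      (measurable_const.add (hbmeas k))))
  have step1 : ∫⁻ x in E, ENNReal.ofReal (a k x) ∂ν ≤
      ∫⁻ x in E, ENNReal.ofReal ((1 / (2 * t)) * (a k x ^ 2 / (1 + b k x))) ∂ν +
      ∫⁻ x in E, ENNReal.ofReal (t / 2 * (1 + b k x)) ∂ν := by
    rw [← lintegral_add_left hmeas1]
    exact lintegral_mono fun x => hpt x
  -- first term ≤ ofReal (ε/4)
  have hfirst : ∫⁻ x in E, ENNReal.ofReal ((1 / (2 * t)) * (a k x ^ 2 / (1 + b k x))) ∂ν
      ≤ ENNReal.ofReal (ε / 4) := by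
    have heq : ∀ x, ENNReal.ofReal ((1 / (2 * t)) * (a k x ^ 2 / (1 + b k x)))
        = ENNReal.ofReal (1 / (2 * t)) * ENNReal.ofReal (a k x ^ 2 / (1 + b k x)) := by
      intro x
      rw [ENNReal.ofReal_mul (by positivity)]
    simp only [heq]
    rw [lintegral_const_mul' _ _ ENNReal.ofReal_ne_top]
    calc ENNReal.ofReal (1 / (2 * t)) * ∫⁻ x in E, ENNReal.ofReal (a k x ^ 2 / (1 + b k x)) ∂ν
        ≤ ENNReal.ofReal (1 / (2 * t)) * ENNReal.ofReal M := by
          gcongr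
          exact le_trans (setLIntegral_le_lintegral _ _) (hbound k)
      _ = ENNReal.ofReal (1 / (2 * t) * M) := by
          rw [ENNReal.ofReal_mul (by positivity)]
      _ = ENNReal.ofReal (ε / 4) := by
          congr 1
          field_simp [ht_def]
          rw [ht_def, mul_assoc, div_mul_cancel₀ _ hε.ne']; ring
  -- second term < ofReal (ε/2)
  have hsecond : ∫⁻ x in E, ENNReal.ofReal (t / 2 * (1 + b k x)) ∂ν
      < ENNReal.ofReal (ε / 2) := by
    have heq : ∀ x, ENNReal.ofReal (t / 2 * (1 + b k x))
        = ENNReal.ofReal (t / 2) * (1 + ENNReal.ofReal (b k x)) := by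
      intro x
      rw [ENNReal.ofReal_mul (by positivity),
        ENNReal.ofReal_add one_pos.le (hbnonneg k x), ENNReal.ofReal_one]
    simp only [heq]
    rw [lintegral_const_mul' _ _ ENNReal.ofReal_ne_top]
    have hadd : ∫⁻ x in E, (1 + ENNReal.ofReal (b k x)) ∂ν
        = ν E + ∫⁻ x in E, ENNReal.ofReal (b k x) ∂ν := by
      rw [lintegral_add_left measurable_const]
      simp
    rw [hadd]
    have hsum : ν E + ∫⁻ x in E, ENNReal.ofReal (b k x) ∂ν
        < ENNReal.ofReal (ε / (2 * t)) + ENNReal.ofReal (ε / (2 * t)) :=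
      ENNReal.add_lt_add hν hb
    calc ENNReal.ofReal (t / 2) * (ν E + ∫⁻ x in E, ENNReal.ofReal (b k x) ∂ν)
        < ENNReal.ofReal (t / 2) * (ENNReal.ofReal (ε / (2 * t)) + ENNReal.ofReal (ε / (2 * t))) := by
          apply ENNReal.mul_lt_mul_right
          · simp [ENNReal.ofReal_eq_zero]; positivity
          · exact ENNReal.ofReal_ne_top
          · exact hsum
      _ = ENNReal.ofReal (ε / 2) := by
          rw [← ENNReal.ofReal_add (by positivity) (by positivity),
            ← ENNReal.ofReal_mul (by positivity)]
          congr 1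
          field_simp
          ring
  calc ∫⁻ x in E, ENNReal.ofReal (a k x) ∂ν
      ≤ ∫⁻ x in E, ENNReal.ofReal ((1 / (2 * t)) * (a k x ^ 2 / (1 + b k x))) ∂ν +
        ∫⁻ x in E, ENNReal.ofReal (t / 2 * (1 + b k x)) ∂ν := step1
    _ < ENNReal.ofReal (ε / 4) + ENNReal.ofReal (ε / 2) :=
        ENNReal.add_lt_add_of_le_of_lt (ne_top_of_le_ne_top ENNReal.ofReal_ne_top hfirst) hfirst hsecond
    _ = ENNReal.ofReal (3 * ε / 4) := by
        rw [← ENNReal.ofReal_add (by positivity) (by positivity)]; congr 1; ring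
    _ < ENNReal.ofReal ε := by
        apply ENNReal.ofReal_lt_ofReal_iff_of_nonneg (by positivity) |>.mpr
        linarith
end
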